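/- arXiv:2210.07754 — 5 statements merged into one kernel-verified Lean document; each statement's English description precedes it below -/
import Mathlib

section
/- For integers q ≥ 2, L ≥ 2, the function f_{q,L} : Δ([q]) → R defined by f_{q,L}(P) = E_{(X_1,...,X_L)~P^{⊗L}}[plur(X_1,...,X_L)] is Schur convex: whenever probability vectors P majorizes Q, f_{q,L}(P) ≥ f_{q,L}(Q). -/
open Finset

/-- Sum of the `k` largest entries of `a`. -/
noncomputable def kMaxSum {d : ℕ} (a : Fin d → ℝ) (k : ℕ) : ℝ :=
  sSup ((fun s : Finset (Fin d) => ∑ i ∈ s, a i) '' {s : Finset (Fin d) | s.card = k})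

/-- `a` majorizes `b`. -/
def Majorizes {d : ℕ} (a b : Fin d → ℝ) : Prop :=
  (∀ k : ℕ, kMaxSum b k ≤ kMaxSum a k) ∧ ∑ i, a i = ∑ i, b i

/-- The plurality of a tuple of symbols. -/
def plur {q L : ℕ} (x : Fin L → Fin q) : ℕ :=
  Finset.univ.sup fun a : Fin q => (Finset.univ.filter fun i => x i = a).card

/-- `f_{q,L}(P)`: the expected plurality of `L` i.i.d. samples from `P`. -/
noncomputable def fqL (q L : ℕ) (P : Fin q → ℝ) : ℝ :=
  ∑ x : Fin L → Fin q, (∏ i, P (x i)) * (plur x : ℝ)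

/-! ### Auxiliary lemmas -/

section Aux

variable {q L : ℕ}

lemma plur_comp (σ : Equiv.Perm (Fin q)) (x : Fin L → Fin q) :
    plur (fun i => σ (x i)) = plur x := by
  unfold plur
  beta_reduce
  apply le_antisymm
  · apply Finset.sup_le
    intro a _
    have h : (univ.filter fun i => σ (x i) = a) = (univ.filter fun i => x i = σ.symm a) := by
      apply Finset.filter_congr
      intro i _
      exact Equiv.apply_eq_iff_eq_symm_apply σ
    rw [h]
    exact Finset.le_sup (f := fun a => (univ.filter fun i => x i = a).card) (mem_univ (σ.symm a))
  · apply Finset.sup_le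
    intro a _
    have h : (univ.filter fun i => x i = a) = (univ.filter fun i => σ (x i) = σ a) := by
      apply Finset.filter_congr
      intro i _
      simp
    rw [h]
    exact Finset.le_sup (f := fun a => (univ.filter fun i => σ (x i) = a).card) (mem_univ (σ a))

lemma fqL_comp (σ : Equiv.Perm (Fin q)) (P : Fin q → ℝ) :
    fqL q L (P ∘ σ) = fqL q L P := by
  unfold fqL
  refine Fintype.sum_bijective (fun (x : Fin L → Fin q) (i : Fin L) => σ (x i)) ?_ _ _ ?_
  · constructor
    · intro x y h
      funext i
      exact σ.injective (congrFun h i)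
    · intro y
      exact ⟨fun i => σ.symm (y i), funext fun i => by simp⟩
  · intro x
    show (∏ i, (P ∘ σ) (x i)) * (plur x : ℝ)
        = (∏ i, P (σ (x i))) * (plur (fun i => σ (x i)) : ℝ)
    rw [plur_comp σ x]
    rfl

lemma kMaxSum_comp {d : ℕ} (σ : Equiv.Perm (Fin d)) (a : Fin d → ℝ) (k : ℕ) :
    kMaxSum (a ∘ σ) k = kMaxSum a k := by
  unfold kMaxSum
  congr 1
  ext r
  simp only [Set.mem_image, Set.mem_setOf_eq]
  constructor
  · rintro ⟨s, hs, rfl⟩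
    refine ⟨s.map σ.toEmbedding, by simpa using hs, ?_⟩
    rw [Finset.sum_map]
    rfl
  · rintro ⟨t, ht, rfl⟩
    refine ⟨t.map σ.symm.toEmbedding, by simpa using ht, ?_⟩
    rw [Finset.sum_map]
    apply Finset.sum_congr rfl
    intro i _
    simp

/-- Value of `a` at natural index `j`, or `0` out of range. -/
noncomputable def pad {d : ℕ} (a : Fin d → ℝ) (j : ℕ) : ℝ :=
  if h : j < d then a ⟨j, h⟩ else 0

lemma strictMono_fin_le {k d : ℕ} {f : Fin k → Fin d} (hf : StrictMono f) :
    ∀ n, ∀ h : n < k, n ≤ (f ⟨n, h⟩ : ℕ) := by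
  intro n
  induction n with
  | zero => intro h; exact Nat.zero_le _
  | succ m ih =>
    intro h
    have h1 : m < k := Nat.lt_of_succ_lt h
    have h2 : f ⟨m, h1⟩ < f ⟨m + 1, h⟩ := hf (by simp [Fin.lt_def])
    have h3 : (f ⟨m, h1⟩ : ℕ) < (f ⟨m + 1, h⟩ : ℕ) := h2
    have h4 := ih h1
    omega

lemma sum_card_le {d k : ℕ} {a : Fin d → ℝ} (ha : Antitone a) (s : Finset (Fin d))
    (hs : s.card = k) : ∑ i ∈ s, a i ≤ ∑ j ∈ Finset.range k, pad a j := by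
  have hmap : s = Finset.univ.map (s.orderEmbOfFin hs).toEmbedding := by
    ext i
    simp only [Finset.mem_map, Finset.mem_univ, true_and]
    constructor
    · intro hi
      have h : i ∈ Set.range (s.orderEmbOfFin hs) := by
        rw [Finset.range_orderEmbOfFin]
        exact hi
      obtain ⟨j, hj⟩ := h
      exact ⟨j, hj⟩
    · rintro ⟨j, rfl⟩
      exact Finset.orderEmbOfFin_mem s hs j
  rw [hmap, Finset.sum_map, ← Fin.sum_univ_eq_sum_range (fun j => pad a j) k]
  apply Finset.sum_le_sum
  intro j _
  have hle : (j : ℕ) ≤ ((s.orderEmbOfFin hs) j : ℕ) := by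
    have := strictMono_fin_le (s.orderEmbOfFin hs).strictMono (j : ℕ) j.2
    simpa using this
  have hjd : (j : ℕ) < d := lt_of_le_of_lt hle ((s.orderEmbOfFin hs) j).2
  have hp : pad a (j : ℕ) = a ⟨(j : ℕ), hjd⟩ := dif_pos hjd
  rw [hp]
  exact ha (by exact hle)

lemma kMaxSum_le_prefix {d k : ℕ} {a : Fin d → ℝ} (ha : Antitone a) (hk : k ≤ d) :
    kMaxSum a k ≤ ∑ j ∈ Finset.range k, pad a j := by
  unfold kMaxSum
  apply csSup_le
  · obtain ⟨s, -, hs⟩ := Finset.exists_subset_card_eq (s := (Finset.univ : Finset (Fin d))) (n := k)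
      (by simpa using hk)
    exact ⟨_, ⟨s, hs, rfl⟩⟩
  · rintro r ⟨s, hs, rfl⟩
    exact sum_card_le ha s hs

lemma prefix_le_kMaxSum {d k : ℕ} (a : Fin d → ℝ) (hk : k ≤ d) :
    ∑ j ∈ Finset.range k, pad a j ≤ kMaxSum a k := by
  have hbdd : BddAbove ((fun s : Finset (Fin d) => ∑ i ∈ s, a i) '' {s | s.card = k}) :=
    ((Set.toFinite {s : Finset (Fin d) | s.card = k}).image _).bddAbove
  have heq : ∑ j ∈ Finset.range k, pad a j
      = ∑ i ∈ Finset.univ.map (Fin.castLEEmb hk), a i := by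
    rw [Finset.sum_map, ← Fin.sum_univ_eq_sum_range (fun j => pad a j) k]
    apply Finset.sum_congr rfl
    intro j _
    have hjd : (j : ℕ) < d := lt_of_lt_of_le j.2 hk
    simp [pad, hjd, Fin.castLEEmb, Fin.castLE]
  rw [heq]
  apply le_csSup hbdd
  exact ⟨_, by simp, rfl⟩

lemma exists_antitone_comp {d : ℕ} (f : Fin d → ℝ) :
    ∃ σ : Equiv.Perm (Fin d), Antitone (f ∘ σ) := by
  refine ⟨(Fin.revPerm).trans (Tuple.sort f), ?_⟩
  intro i j hij
  have h := Tuple.monotone_sort f (Fin.rev_le_rev.mpr hij)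
  simpa using h

lemma abel_nonneg (n : ℕ) (dd hh : ℕ → ℝ)
    (hpre : ∀ k, k < n → 0 ≤ ∑ j ∈ Finset.range (k + 1), dd j)
    (htot : ∑ j ∈ Finset.range n, dd j = 0)
    (hmono : ∀ k, k + 1 < n → hh (k + 1) ≤ hh k) :
    0 ≤ ∑ k ∈ Finset.range n, dd k * hh k := by
  have h := Finset.sum_range_by_parts hh dd n
  simp only [smul_eq_mul] at h
  have h2 : ∑ k ∈ Finset.range n, dd k * hh k = ∑ i ∈ Finset.range n, hh i * dd i := by
    apply Finset.sum_congr rfl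
    intros
    ring
  rw [h2, h, htot, mul_zero, zero_sub, neg_nonneg]
  apply Finset.sum_nonpos
  intro i hi
  have hi' : i < n - 1 := Finset.mem_range.mp hi
  have h1 : hh (i + 1) - hh i ≤ 0 := by
    have := hmono i (by omega)
    linarith
  exact mul_nonpos_of_nonpos_of_nonneg h1 (hpre i (by omega))

lemma pow_mul_pow_le {x y : ℝ} (hy : 0 ≤ y) (hxy : y ≤ x) {m n : ℕ} (hmn : m ≤ n) :
    x ^ m * y ^ n ≤ x ^ n * y ^ m := by
  obtain ⟨c, rfl⟩ := Nat.exists_eq_add_of_le hmn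
  have hx : 0 ≤ x := le_trans hy hxy
  calc x ^ m * y ^ (m + c) = (x ^ m * y ^ m) * y ^ c := by ring
    _ ≤ (x ^ m * y ^ m) * x ^ c := by
        apply mul_le_mul_of_nonneg_left (pow_le_pow_left₀ hy hxy c) (by positivity)
    _ = x ^ (m + c) * y ^ m := by ring

lemma count_split (l : Fin L) (y : Fin L → Fin q) (c : Fin q) :
    (univ.filter fun i => y i = c).card
      = ((univ.erase l).filter fun i => y i = c).card + (if y l = c then 1 else 0) := by
  have h0 : (univ : Finset (Fin L)) = insert l (univ.erase l) :=
    (Finset.insert_erase (mem_univ l)).symm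
  have h1 : (univ.filter fun i => y i = c)
      = if y l = c then insert l ((univ.erase l).filter fun i => y i = c)
        else ((univ.erase l).filter fun i => y i = c) := by
    conv_lhs => rw [h0]
    rw [Finset.filter_insert]
  rw [h1]
  by_cases h : y l = c
  · rw [if_pos h, if_pos h, Finset.card_insert_of_notMem fun hmem =>
      (Finset.notMem_erase l univ) (Finset.mem_of_mem_filter l hmem)]
  · rw [if_neg h, if_neg h, add_zero]

lemma mySwap_eq_iff {α : Type*} [DecidableEq α] (a b y c : α) :
    Equiv.swap a b y = c ↔ y = Equiv.swap a b c := by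
  rw [Equiv.apply_eq_iff_eq_symm_apply, Equiv.symm_swap]

lemma count_le_plur (x : Fin L → Fin q) (c : Fin q) :
    (univ.filter fun i => x i = c).card ≤ plur x := by
  unfold plur
  exact Finset.le_sup (f := fun a => (univ.filter fun i => x i = a).card) (mem_univ c)

lemma plur_le (x : Fin L → Fin q) (n : ℕ)
    (h : ∀ c, (univ.filter fun i => x i = c).card ≤ n) : plur x ≤ n := by
  unfold plur
  exact Finset.sup_le fun c _ => h c

lemma prod_split (l : Fin L) {a b : Fin q} (hne : a ≠ b)
    (x : Fin L → Fin q) (g : Fin L → ℝ) :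
    ∏ i ∈ univ.erase l, g i
      = (∏ i ∈ (univ.erase l).filter (fun i => x i = a), g i)
        * ((∏ i ∈ (univ.erase l).filter (fun i => x i = b), g i)
          * ∏ i ∈ (univ.erase l).filter (fun i => ¬(x i = a) ∧ ¬(x i = b)), g i) := by
  have e1 : ((univ.erase l).filter (fun i => ¬(x i = a))).filter (fun i => x i = b)
      = (univ.erase l).filter (fun i => x i = b) := by
    rw [Finset.filter_filter]
    apply Finset.filter_congr
    intro i _
    constructor
    · exact fun h => h.2
    · intro h
      refine ⟨?_, h⟩
      rw [h]
      exact fun hba => hne hba.symm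
  have e2 : ((univ.erase l).filter (fun i => ¬(x i = a))).filter (fun i => ¬(x i = b))
      = (univ.erase l).filter (fun i => ¬(x i = a) ∧ ¬(x i = b)) := by
    rw [Finset.filter_filter]
  rw [← Finset.prod_filter_mul_prod_filter_not (univ.erase l) (fun i => x i = a) g,
    ← Finset.prod_filter_mul_prod_filter_not
      ((univ.erase l).filter (fun i => ¬(x i = a))) (fun i => x i = b) g, e1, e2]

lemma term_key (v : Fin q → ℝ) (hv : ∀ i, 0 ≤ v i) (l : Fin L) {a b : Fin q}
    (hne : a ≠ b) (hab : v b ≤ v a) (x : Fin L → Fin q) (hxl : x l = a) :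
    0 ≤ ((∏ i ∈ univ.erase l, v (x i)) - ∏ i ∈ univ.erase l, v (Equiv.swap a b (x i)))
        * ((plur x : ℝ) - (plur (fun i => if i = l then a else Equiv.swap a b (x i)) : ℝ)) := by
  set y : Fin L → Fin q := fun i => if i = l then a else Equiv.swap a b (x i) with hy
  set ca := ((univ.erase l).filter fun i => x i = a).card with hca
  set cb := ((univ.erase l).filter fun i => x i = b).card with hcb
  have hyl : y l = a := if_pos rfl
  have hyarr : ∀ i, i ≠ l → y i = Equiv.swap a b (x i) := fun i hil => if_neg hil
  -- erase-l counts of y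
  have hcy : ∀ c : Fin q, ((univ.erase l).filter fun i => y i = c)
      = ((univ.erase l).filter fun i => x i = Equiv.swap a b c) := by
    intro c
    apply Finset.filter_congr
    intro i hi
    rw [hyarr i (Finset.ne_of_mem_erase hi)]
    exact mySwap_eq_iff a b (x i) c
  -- full counts
  have hcnt_xa : (univ.filter fun i => x i = a).card = ca + 1 := by
    rw [count_split l x a, if_pos hxl]
  have hcnt_xb : (univ.filter fun i => x i = b).card = cb := by
    rw [count_split l x b, if_neg (fun h => hne (hxl.symm.trans h)), add_zero]
  have hcnt_xc : ∀ c : Fin q, c ≠ a → (univ.filter fun i => x i = c).card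
      = ((univ.erase l).filter fun i => x i = c).card := by
    intro c hc
    rw [count_split l x c, if_neg (fun h => hc (hxl.symm.trans h).symm), add_zero]
  have hcnt_ya : (univ.filter fun i => y i = a).card = cb + 1 := by
    rw [count_split l y a, if_pos hyl, hcy a, Equiv.swap_apply_left]
  have hcnt_yb : (univ.filter fun i => y i = b).card = ca := by
    rw [count_split l y b, if_neg (fun h => hne (hyl.symm.trans h)), add_zero, hcy b,
      Equiv.swap_apply_right]
  have hcnt_yc : ∀ c : Fin q, c ≠ a → c ≠ b → (univ.filter fun i => y i = c).card
      = (univ.filter fun i => x i = c).card := by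
    intro c hca' hcb'
    rw [count_split l y c, if_neg (fun h => hca' (hyl.symm.trans h).symm), add_zero,
      hcy c, Equiv.swap_apply_of_ne_of_ne (Ne.symm (fun h => hca' h.symm)) (Ne.symm (fun h => hcb' h.symm)),
      hcnt_xc c hca']
  -- product split identities
  set rest := ∏ i ∈ (univ.erase l).filter (fun i => ¬(x i = a) ∧ ¬(x i = b)), v (x i) with hrestdef
  have hrest : 0 ≤ rest := Finset.prod_nonneg fun i _ => hv _
  have hW : (∏ i ∈ univ.erase l, v (x i)) = v a ^ ca * (v b ^ cb * rest) := by
    rw [prod_split l hne x (fun i => v (x i))]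
    congr 1
    · rw [Finset.prod_congr rfl (fun i hi => by rw [(Finset.mem_filter.1 hi).2]),
        Finset.prod_const]
    congr 1
    · rw [Finset.prod_congr rfl (fun i hi => by rw [(Finset.mem_filter.1 hi).2]),
        Finset.prod_const]
  have hW' : (∏ i ∈ univ.erase l, v (Equiv.swap a b (x i))) = v a ^ cb * (v b ^ ca * rest) := by
    rw [prod_split l hne x (fun i => v (Equiv.swap a b (x i)))]
    rw [Finset.prod_congr rfl
        (fun i hi => by rw [(Finset.mem_filter.1 hi).2, Equiv.swap_apply_left]),
      Finset.prod_const]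
    rw [Finset.prod_congr (rfl : ((univ.erase l).filter fun i => x i = b) = _)
        (fun i hi => by rw [(Finset.mem_filter.1 hi).2, Equiv.swap_apply_right]),
      Finset.prod_const]
    have hr : ∏ i ∈ (univ.erase l).filter (fun i => ¬(x i = a) ∧ ¬(x i = b)),
        v (Equiv.swap a b (x i)) = rest := by
      rw [hrestdef]
      apply Finset.prod_congr rfl
      intro i hi
      rw [Equiv.swap_apply_of_ne_of_ne (Finset.mem_filter.1 hi).2.1 (Finset.mem_filter.1 hi).2.2]
    rw [hr]
    ring
  rcases le_or_gt cb ca with hcase | hcase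
  · -- weights: W' ≤ W, plur y ≤ plur x
    have hWW : (∏ i ∈ univ.erase l, v (Equiv.swap a b (x i))) ≤ ∏ i ∈ univ.erase l, v (x i) := by
      rw [hW, hW', ← mul_assoc, ← mul_assoc]
      exact mul_le_mul_of_nonneg_right (pow_mul_pow_le (hv b) hab hcase) hrest
    have hplur : plur y ≤ plur x := by
      apply plur_le
      intro c
      by_cases hc1 : c = a
      · subst hc1
        rw [hcnt_ya]
        calc cb + 1 ≤ ca + 1 := by omega
          _ = (univ.filter fun i => x i = c).card := hcnt_xa.symm
          _ ≤ plur x := count_le_plur x c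
      by_cases hc2 : c = b
      · subst hc2
        rw [hcnt_yb]
        calc ca ≤ ca + 1 := by omega
          _ = (univ.filter fun i => x i = a).card := hcnt_xa.symm
          _ ≤ plur x := count_le_plur x a
      · rw [hcnt_yc c hc1 hc2]
        exact count_le_plur x c
    apply mul_nonneg
    · rw [sub_nonneg]
      exact hWW
    · rw [sub_nonneg]
      exact_mod_cast hplur
  · -- weights: W ≤ W', plur x ≤ plur y
    have hWW : (∏ i ∈ univ.erase l, v (x i)) ≤ ∏ i ∈ univ.erase l, v (Equiv.swap a b (x i)) := by
      rw [hW, hW', ← mul_assoc, ← mul_assoc]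
      exact mul_le_mul_of_nonneg_right (pow_mul_pow_le (hv b) hab hcase.le) hrest
    have hplur : plur x ≤ plur y := by
      apply plur_le
      intro c
      by_cases hc1 : c = a
      · subst hc1
        rw [hcnt_xa]
        calc ca + 1 ≤ cb + 1 := by omega
          _ = (univ.filter fun i => y i = c).card := hcnt_ya.symm
          _ ≤ plur y := count_le_plur y c
      by_cases hc2 : c = b
      · subst hc2
        rw [hcnt_xb]
        calc cb ≤ cb + 1 := by omega
          _ = (univ.filter fun i => y i = a).card := hcnt_ya.symm
          _ ≤ plur y := count_le_plur y a
      · rw [← hcnt_yc c hc1 hc2]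
        exact count_le_plur y c
    apply mul_nonneg_of_nonpos_of_nonpos
    · rw [sub_nonpos]
      exact hWW
    · rw [sub_nonpos]
      exact_mod_cast hplur

lemma T_mono (v : Fin q → ℝ) (hv : ∀ i, 0 ≤ v i) (l : Fin L) (a b : Fin q)
    (hab : v b ≤ v a) :
    ∑ x ∈ univ.filter (fun x : Fin L → Fin q => x l = b),
        (∏ i ∈ univ.erase l, v (x i)) * (plur x : ℝ)
      ≤ ∑ x ∈ univ.filter (fun x : Fin L → Fin q => x l = a),
        (∏ i ∈ univ.erase l, v (x i)) * (plur x : ℝ) := by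
  rcases eq_or_ne a b with rfl | hne
  · exact le_refl _
  -- reindex the b-fiber sum over the a-fiber via full swap
  have hLHS : ∑ x ∈ univ.filter (fun x : Fin L → Fin q => x l = b),
        (∏ i ∈ univ.erase l, v (x i)) * (plur x : ℝ)
      = ∑ x ∈ univ.filter (fun x : Fin L → Fin q => x l = a),
        (∏ i ∈ univ.erase l, v (Equiv.swap a b (x i))) * (plur x : ℝ) := by
    refine (Finset.sum_nbij' (fun (x : Fin L → Fin q) (i : Fin L) => Equiv.swap a b (x i))
      (fun (x : Fin L → Fin q) (i : Fin L) => Equiv.swap a b (x i)) ?_ ?_ ?_ ?_ ?_).symm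
    · intro x hx
      simp only [Finset.mem_filter, Finset.mem_univ, true_and] at hx ⊢
      rw [hx, Equiv.swap_apply_left]
    · intro x hx
      simp only [Finset.mem_filter, Finset.mem_univ, true_and] at hx ⊢
      rw [hx, Equiv.swap_apply_right]
    · intro x _
      funext i
      simp
    · intro x _
      funext i
      simp
    · intro x _
      rw [plur_comp (Equiv.swap a b) x]
  rw [hLHS, ← sub_nonneg, ← Finset.sum_sub_distrib]
  -- pair each x with its off-slot swap
  set ι : (Fin L → Fin q) → (Fin L → Fin q) :=
    fun x i => if i = l then a else Equiv.swap a b (x i) with hι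
  set A := univ.filter (fun x : Fin L → Fin q => x l = a) with hA
  have hmemA : ∀ x ∈ A, ι x ∈ A := by
    intro x _
    simp only [hA, Finset.mem_filter, Finset.mem_univ, true_and]
    exact if_pos rfl
  have hinv : ∀ x ∈ A, ι (ι x) = x := by
    intro x hx
    have hxl : x l = a := by
      simp only [hA, Finset.mem_filter, Finset.mem_univ, true_and] at hx
      exact hx
    funext i
    by_cases hil : i = l
    · subst hil
      simp only [hι, if_pos rfl]
      exact hxl.symm
    · simp only [hι, if_neg hil]
      simp
  have hw1 : ∀ x : Fin L → Fin q, (∏ i ∈ univ.erase l, v (ι x i))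
      = ∏ i ∈ univ.erase l, v (Equiv.swap a b (x i)) := by
    intro x
    apply Finset.prod_congr rfl
    intro i hi
    rw [show ι x i = Equiv.swap a b (x i) from if_neg (Finset.ne_of_mem_erase hi)]
  have hw2 : ∀ x : Fin L → Fin q, (∏ i ∈ univ.erase l, v (Equiv.swap a b (ι x i)))
      = ∏ i ∈ univ.erase l, v (x i) := by
    intro x
    apply Finset.prod_congr rfl
    intro i hi
    rw [show ι x i = Equiv.swap a b (x i) from if_neg (Finset.ne_of_mem_erase hi)]
    simp
  have hsum2 : ∑ x ∈ A, ((∏ i ∈ univ.erase l, v (x i)) * (plur x : ℝ)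
        - (∏ i ∈ univ.erase l, v (Equiv.swap a b (x i))) * (plur x : ℝ))
      = ∑ x ∈ A, ((∏ i ∈ univ.erase l, v (Equiv.swap a b (x i))) * (plur (ι x) : ℝ)
        - (∏ i ∈ univ.erase l, v (x i)) * (plur (ι x) : ℝ)) := by
    refine Finset.sum_nbij' ι ι hmemA hmemA hinv hinv ?_
    intro x hx
    rw [hw1 x, hw2 x, hinv x hx]
  have hterm : ∀ x ∈ A, 0 ≤ ((∏ i ∈ univ.erase l, v (x i))
      - ∏ i ∈ univ.erase l, v (Equiv.swap a b (x i))) * ((plur x : ℝ) - (plur (ι x) : ℝ)) := by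
    intro x hx
    have hxl : x l = a := by
      simp only [hA, Finset.mem_filter, Finset.mem_univ, true_and] at hx
      exact hx
    exact term_key v hv l hne hab x hxl
  have h2 : 0 ≤ ∑ x ∈ A, (((∏ i ∈ univ.erase l, v (x i)) * (plur x : ℝ)
        - (∏ i ∈ univ.erase l, v (Equiv.swap a b (x i))) * (plur x : ℝ))
      + ((∏ i ∈ univ.erase l, v (Equiv.swap a b (x i))) * (plur (ι x) : ℝ)
        - (∏ i ∈ univ.erase l, v (x i)) * (plur (ι x) : ℝ))) := by
    apply Finset.sum_nonneg
    intro x hx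
    have hexp : (((∏ i ∈ univ.erase l, v (x i)) * (plur x : ℝ)
        - (∏ i ∈ univ.erase l, v (Equiv.swap a b (x i))) * (plur x : ℝ))
      + ((∏ i ∈ univ.erase l, v (Equiv.swap a b (x i))) * (plur (ι x) : ℝ)
        - (∏ i ∈ univ.erase l, v (x i)) * (plur (ι x) : ℝ)))
        = ((∏ i ∈ univ.erase l, v (x i))
          - ∏ i ∈ univ.erase l, v (Equiv.swap a b (x i))) * ((plur x : ℝ) - (plur (ι x) : ℝ)) := by
      ring
    rw [hexp]
    exact hterm x hx
  rw [Finset.sum_add_distrib] at h2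
  linarith [hsum2, h2]

lemma hasDerivAt_fqL (Q' D : Fin q → ℝ) (t : ℝ) :
    HasDerivAt (fun s => fqL q L (fun i => Q' i + s * D i))
      (∑ x : Fin L → Fin q,
        (∑ m, (∏ j ∈ univ.erase m, (Q' (x j) + t * D (x j))) * D (x m)) * (plur x : ℝ)) t := by
  have h : ∀ x : Fin L → Fin q,
      HasDerivAt (fun s => (∏ i, (Q' (x i) + s * D (x i))) * (plur x : ℝ))
        ((∑ m, (∏ j ∈ univ.erase m, (Q' (x j) + t * D (x j))) * D (x m)) * (plur x : ℝ)) t := by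
    intro x
    have hp : HasDerivAt (fun s => ∏ i, (Q' (x i) + s * D (x i)))
        (∑ m ∈ (univ : Finset (Fin L)),
          (∏ j ∈ univ.erase m, (Q' (x j) + t * D (x j))) • D (x m)) t := by
      apply HasDerivAt.fun_finsetProd
      intro i _
      simpa using ((hasDerivAt_id t).mul_const (D (x i))).const_add (Q' (x i))
    simpa [smul_eq_mul] using hp.mul_const ((plur x : ℝ))
  have hsum := HasDerivAt.fun_sum (u := (univ : Finset (Fin L → Fin q))) (fun x _ => h x)
  simpa [fqL] using hsum

lemma deriv_expr_nonneg (w : Fin q → ℝ) (hw : ∀ i, 0 ≤ w i)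
    (hwa : Antitone w) (D : Fin q → ℝ)
    (hpre : ∀ k, k < q → 0 ≤ ∑ j ∈ Finset.range (k + 1), pad D j)
    (htot : ∑ i, D i = 0) :
    0 ≤ ∑ x : Fin L → Fin q,
        (∑ m, (∏ j ∈ univ.erase m, w (x j)) * D (x m)) * (plur x : ℝ) := by
  have h1 : ∑ x : Fin L → Fin q, (∑ m, (∏ j ∈ univ.erase m, w (x j)) * D (x m)) * (plur x : ℝ)
      = ∑ m : Fin L, ∑ x : Fin L → Fin q,
          D (x m) * ((∏ j ∈ univ.erase m, w (x j)) * (plur x : ℝ)) := by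
    simp_rw [Finset.sum_mul]
    rw [Finset.sum_comm]
    apply Finset.sum_congr rfl
    intro m _
    apply Finset.sum_congr rfl
    intro x _
    ring
  have h2 : ∀ m : Fin L, ∑ x : Fin L → Fin q,
        D (x m) * ((∏ j ∈ univ.erase m, w (x j)) * (plur x : ℝ))
      = ∑ a : Fin q, D a * ∑ x ∈ univ.filter (fun x : Fin L → Fin q => x m = a),
          (∏ j ∈ univ.erase m, w (x j)) * (plur x : ℝ) := by
    intro m
    rw [← Finset.sum_fiberwise univ (fun x : Fin L → Fin q => x m)
        (fun x => D (x m) * ((∏ j ∈ univ.erase m, w (x j)) * (plur x : ℝ)))]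
    apply Finset.sum_congr rfl
    intro a _
    rw [Finset.mul_sum]
    apply Finset.sum_congr rfl
    intro x hx
    rw [(Finset.mem_filter.1 hx).2]
  have h3 : ∀ m : Fin L, 0 ≤ ∑ a : Fin q,
      D a * ∑ x ∈ univ.filter (fun x : Fin L → Fin q => x m = a),
        (∏ j ∈ univ.erase m, w (x j)) * (plur x : ℝ) := by
    intro m
    set T : Fin q → ℝ := fun a => ∑ x ∈ univ.filter (fun x : Fin L → Fin q => x m = a),
        (∏ j ∈ univ.erase m, w (x j)) * (plur x : ℝ) with hT
    set hh : ℕ → ℝ := fun k => if h : k < q then T ⟨k, h⟩ else 0 with hhh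
    have heq : ∑ a : Fin q, D a * T a = ∑ k ∈ Finset.range q, pad D k * hh k := by
      rw [← Fin.sum_univ_eq_sum_range (fun k => pad D k * hh k) q]
      apply Finset.sum_congr rfl
      intro a _
      have h4 : pad D (a : ℕ) = D a := by
        rw [pad, dif_pos a.2]
      have h5 : hh (a : ℕ) = T a := by
        rw [hhh]
        simp only [a.2, dif_pos]
      rw [h4, h5]
    rw [heq]
    apply abel_nonneg q (pad D) hh hpre
    · rw [← Fin.sum_univ_eq_sum_range (fun k => pad D k) q, ← htot]
      apply Finset.sum_congr rfl
      intro a _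
      rw [pad, dif_pos a.2]
    · intro k hk
      have hk1 : k < q := by omega
      rw [hhh]
      simp only [hk, hk1, dif_pos]
      exact T_mono w hw m ⟨k, hk1⟩ ⟨k + 1, hk⟩ (hwa (by simp [Fin.le_def]))
  rw [h1]
  apply Finset.sum_nonneg
  intro m _
  rw [h2 m]
  exact h3 m

end Aux

theorem stmt3 (q L : ℕ) (hq : 2 ≤ q) (hL : 2 ≤ L) (P Q : Fin q → ℝ)
    (hP : ∀ i, 0 ≤ P i) (hPsum : ∑ i, P i = 1)
    (hQ : ∀ i, 0 ≤ Q i) (hQsum : ∑ i, Q i = 1)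
    (hmaj : Majorizes P Q) :
    fqL q L Q ≤ fqL q L P := by
  obtain ⟨σP, hPs⟩ := exists_antitone_comp P
  obtain ⟨σQ, hQs⟩ := exists_antitone_comp Q
  set P' : Fin q → ℝ := P ∘ σP with hP'def
  set Q' : Fin q → ℝ := Q ∘ σQ with hQ'def
  have hP'0 : ∀ i, 0 ≤ P' i := fun i => hP _
  have hQ'0 : ∀ i, 0 ≤ Q' i := fun i => hQ _
  have hP'sum : ∑ i, P' i = 1 := by
    rw [← hPsum]
    exact Equiv.sum_comp σP P
  have hQ'sum : ∑ i, Q' i = 1 := by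
    rw [← hQsum]
    exact Equiv.sum_comp σQ Q
  have hpre : ∀ k : ℕ, k ≤ q →
      ∑ j ∈ Finset.range k, pad Q' j ≤ ∑ j ∈ Finset.range k, pad P' j := by
    intro k hk
    calc ∑ j ∈ Finset.range k, pad Q' j ≤ kMaxSum Q' k := prefix_le_kMaxSum Q' hk
      _ = kMaxSum Q k := kMaxSum_comp σQ Q k
      _ ≤ kMaxSum P k := hmaj.1 k
      _ = kMaxSum P' k := (kMaxSum_comp σP P k).symm
      _ ≤ ∑ j ∈ Finset.range k, pad P' j := kMaxSum_le_prefix hPs hk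
  set D : Fin q → ℝ := fun i => P' i - Q' i with hDdef
  have hmono : MonotoneOn (fun t => fqL q L (fun i => Q' i + t * D i)) (Set.Icc (0:ℝ) 1) := by
    apply monotoneOn_of_deriv_nonneg (convex_Icc 0 1)
    · apply Continuous.continuousOn
      rw [continuous_iff_continuousAt]
      exact fun t => (hasDerivAt_fqL Q' D t).differentiableAt.continuousAt
    · intro t _
      exact (hasDerivAt_fqL Q' D t).differentiableAt.differentiableWithinAt
    · intro t ht
      rw [interior_Icc] at ht
      rw [(hasDerivAt_fqL Q' D t).deriv]
      apply deriv_expr_nonneg (fun i => Q' i + t * D i)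
      · intro i
        simp only [hDdef]
        nlinarith [mul_nonneg (sub_nonneg.2 ht.2.le) (hQ'0 i), mul_nonneg ht.1.le (hP'0 i)]
      · intro i j hij
        simp only [hDdef]
        nlinarith [mul_le_mul_of_nonneg_left (hPs hij) ht.1.le,
          mul_le_mul_of_nonneg_left (hQs hij) (sub_nonneg.2 ht.2.le)]
      · intro k hk
        have hpad : ∀ j, pad D j = pad P' j - pad Q' j := by
          intro j
          by_cases h : j < q <;> simp [pad, h, hDdef]
        rw [Finset.sum_congr rfl (fun j _ => hpad j), Finset.sum_sub_distrib]
        have := hpre (k + 1) (by omega)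
        linarith
      · simp only [hDdef]
        rw [Finset.sum_sub_distrib, hP'sum, hQ'sum]
        ring
  have h01 := hmono (Set.left_mem_Icc.2 zero_le_one) (Set.right_mem_Icc.2 zero_le_one)
    zero_le_one
  have e0 : (fun i => Q' i + (0:ℝ) * D i) = Q' := by
    funext i
    ring
  have e1 : (fun i => Q' i + (1:ℝ) * D i) = P' := by
    funext i
    simp only [hDdef]
    ring
  simp only [e0, e1] at h01
  calc fqL q L Q = fqL q L Q' := (fqL_comp σQ Q).symm
    _ ≤ fqL q L P' := h01
    _ = fqL q L P := fqL_comp σP P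
end

section
/- (Schur–Ostrowski verification for f_{q,L}) Let q, L ≥ 2, let (p_1,...,p_q) be a probability vector, and let k ≠ j with p_k > p_j. Then (∂/∂p_k − ∂/∂p_j) f_{q,L}(p_1,...,p_q) = L · Σ binom(L−1; a) Π_{i∉{k,j}} p_i^{a_i} (p_k^{a_k} p_j^{a_j} − p_k^{a_j} p_j^{a_k}), where the sum is over a ∈ A_{q,L-1} with a_k > a_j and a_k = max{a}; in particular this quantity is nonnegative. -/
open Finset

/-- The polynomial expression
`f_{q,L}(p) = Σ_{a ∈ A_{q,L}} binom(L; a) · max{a} · Π_i p_i^{a_i}`. -/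
noncomputable def fqLpoly (q L : ℕ) (P : Fin q → ℝ) : ℝ :=
  ∑ a ∈ Finset.Nat.antidiagonalTuple q L,
    (Nat.multinomial Finset.univ a : ℝ) * ((Finset.univ.sup a : ℕ) : ℝ) *
      ∏ i, P i ^ a i

section Aux

variable {q : ℕ}

lemma sum_update_succ (b : Fin q → ℕ) (k : Fin q) :
    ∑ i, Function.update b k (b k + 1) i = (∑ i, b i) + 1 := by
  rw [Finset.sum_update_of_mem (mem_univ k), ← Finset.erase_eq,
      ← Finset.add_sum_erase _ b (mem_univ k)]
  ring

lemma multinomial_update_succ (b : Fin q → ℕ) (k : Fin q) :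
    (b k + 1) * Nat.multinomial univ (Function.update b k (b k + 1)) =
      ((∑ i, b i) + 1) * Nat.multinomial univ b := by
  have hpos : 0 < ∏ i, Nat.factorial (b i) :=
    Finset.prod_pos fun i _ => Nat.factorial_pos _
  have h1 := Nat.multinomial_spec univ (Function.update b k (b k + 1))
  have h2 := Nat.multinomial_spec univ b
  have hprod : (∏ i, Nat.factorial (Function.update b k (b k + 1) i))
      = (b k + 1) * ∏ i, Nat.factorial (b i) := by
    have e : ∀ i, Nat.factorial (Function.update b k (b k + 1) i)
        = Function.update (fun i => Nat.factorial (b i)) k (Nat.factorial (b k + 1)) i := by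
      intro i
      rcases eq_or_ne i k with rfl | h
      · simp
      · simp [Function.update_of_ne h]
    rw [Finset.prod_congr rfl (fun i _ => e i), Finset.prod_update_of_mem (mem_univ k),
        Nat.factorial_succ, mul_assoc, ← Finset.erase_eq,
        Finset.mul_prod_erase univ (fun i => Nat.factorial (b i)) (mem_univ k)]
  rw [hprod, sum_update_succ] at h1
  have key : (∏ i, Nat.factorial (b i)) *
        ((b k + 1) * Nat.multinomial univ (Function.update b k (b k + 1)))
      = (∏ i, Nat.factorial (b i)) * (((∑ i, b i) + 1) * Nat.multinomial univ b) := by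
    have h2' : ((∑ i, b i) + 1) * ((∏ i, Nat.factorial (b i)) * Nat.multinomial univ b)
        = ((∑ i, b i) + 1) * Nat.factorial (∑ i, b i) := by rw [h2]
    calc (∏ i, Nat.factorial (b i)) *
          ((b k + 1) * Nat.multinomial univ (Function.update b k (b k + 1)))
        = ((b k + 1) * ∏ i, Nat.factorial (b i)) *
            Nat.multinomial univ (Function.update b k (b k + 1)) := by ring
      _ = Nat.factorial ((∑ i, b i) + 1) := h1
      _ = ((∑ i, b i) + 1) * Nat.factorial (∑ i, b i) := Nat.factorial_succ _
      _ = ((∑ i, b i) + 1) * ((∏ i, Nat.factorial (b i)) * Nat.multinomial univ b) := h2'.symm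
      _ = (∏ i, Nat.factorial (b i)) * (((∑ i, b i) + 1) * Nat.multinomial univ b) := by ring
  exact Nat.eq_of_mul_eq_mul_left hpos key

lemma sup_update_succ (b : Fin q → ℕ) (k : Fin q) :
    univ.sup (Function.update b k (b k + 1)) =
      univ.sup b + (if univ.sup b = b k then 1 else 0) := by
  have hle : ∀ i, b i ≤ univ.sup b := fun i => Finset.le_sup (mem_univ i)
  rcases eq_or_ne (univ.sup b) (b k) with h | h
  · rw [if_pos h, h]
    refine le_antisymm (Finset.sup_le fun i _ => ?_) ?_
    · by_cases hik : i = k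
      · subst hik; rw [Function.update_self]
      · rw [Function.update_of_ne hik]
        exact le_trans (h ▸ hle i) (Nat.le_succ _)
    · have h' := Finset.le_sup (f := Function.update b k (b k + 1)) (mem_univ k)
      simpa using h'
  · rw [if_neg h, add_zero]
    have hk : b k < univ.sup b := lt_of_le_of_ne (hle k) (fun e => h e.symm)
    refine le_antisymm (Finset.sup_le fun i _ => ?_) (Finset.sup_le fun i _ => ?_)
    · by_cases hik : i = k
      · subst hik; rw [Function.update_self]; exact hk
      · rw [Function.update_of_ne hik]; exact hle i
    · by_cases hik : i = k
      · subst hik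
        have h1 : b i ≤ Function.update b i (b i + 1) i := by
          rw [Function.update_self]; exact Nat.le_succ _
        exact le_trans h1 (Finset.le_sup (mem_univ i))
      · calc b i = Function.update b k (b k + 1) i := (Function.update_of_ne hik _ _).symm
          _ ≤ _ := Finset.le_sup (mem_univ i)

lemma sup_comp_perm (b : Fin q → ℕ) (σ : Equiv.Perm (Fin q)) :
    univ.sup (fun i => b (σ i)) = univ.sup b := by
  refine le_antisymm (Finset.sup_le fun i _ => Finset.le_sup (mem_univ (σ i)))
    (Finset.sup_le fun i _ => ?_)
  have h : b i = (fun i => b (σ i)) (σ.symm i) := by simp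
  rw [h]
  exact Finset.le_sup (f := fun i => b (σ i)) (mem_univ (σ.symm i))

lemma multinomial_comp_perm (b : Fin q → ℕ) (σ : Equiv.Perm (Fin q)) :
    Nat.multinomial univ (fun i => b (σ i)) = Nat.multinomial univ b := by
  have h1 := Nat.multinomial_spec univ (fun i => b (σ i))
  have h2 := Nat.multinomial_spec univ b
  have hp : (∏ i, Nat.factorial (b (σ i))) = ∏ i, Nat.factorial (b i) :=
    Equiv.prod_comp σ (fun i => Nat.factorial (b i))
  have hs : (∑ i, b (σ i)) = ∑ i, b i := Equiv.sum_comp σ b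
  rw [hp, hs, ← h2] at h1
  exact Nat.eq_of_mul_eq_mul_left (Finset.prod_pos fun i _ => Nat.factorial_pos _) h1

lemma sum_antidiag_update {M : ℕ} (hM : 1 ≤ M) (k : Fin q) (F : (Fin q → ℕ) → ℝ)
    (hF : ∀ a, a k = 0 → F a = 0) :
    ∑ a ∈ Finset.Nat.antidiagonalTuple q M, F a =
      ∑ b ∈ Finset.Nat.antidiagonalTuple q (M - 1), F (Function.update b k (b k + 1)) := by
  rw [← Finset.sum_filter_of_ne (p := fun a => a k ≠ 0)
    (fun a _ h => fun h0 => h (hF a h0))]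
  refine Finset.sum_nbij' (fun a => Function.update a k (a k - 1))
    (fun b => Function.update b k (b k + 1)) ?_ ?_ ?_ ?_ ?_
  · intro a ha
    rw [Finset.mem_filter, Finset.Nat.mem_antidiagonalTuple] at ha
    rw [Finset.Nat.mem_antidiagonalTuple, Finset.sum_update_of_mem (mem_univ k),
        ← Finset.erase_eq]
    have h := Finset.add_sum_erase univ a (mem_univ k)
    have h2 := ha.1
    have h3 := ha.2
    omega
  · intro b hb
    rw [Finset.Nat.mem_antidiagonalTuple] at hb
    rw [Finset.mem_filter, Finset.Nat.mem_antidiagonalTuple,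
        Finset.sum_update_of_mem (mem_univ k), ← Finset.erase_eq]
    have h := Finset.add_sum_erase univ b (mem_univ k)
    constructor
    · omega
    · simp
  · intro a ha
    rw [Finset.mem_filter] at ha
    simp only [Function.update_self, Function.update_idem]
    rw [Nat.sub_add_cancel (Nat.one_le_iff_ne_zero.mpr ha.2), Function.update_eq_self]
  · intro b _
    simp only [Function.update_self, Function.update_idem]
    rw [Nat.add_sub_cancel, Function.update_eq_self]
  · intro a ha
    rw [Finset.mem_filter] at ha
    congr 1
    simp only [Function.update_self, Function.update_idem]
    rw [Nat.sub_add_cancel (Nat.one_le_iff_ne_zero.mpr ha.2), Function.update_eq_self]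

lemma stepB {L : ℕ} (hL : 1 ≤ L) (P : Fin q → ℝ) (k : Fin q) :
    ∑ a ∈ Finset.Nat.antidiagonalTuple q L,
      (Nat.multinomial Finset.univ a : ℝ) * ((Finset.univ.sup a : ℕ) : ℝ) *
        ((∏ i' ∈ univ.erase k, P i' ^ a i') * ((a k : ℝ) * P k ^ (a k - 1)))
    = (L : ℝ) * ∑ b ∈ Finset.Nat.antidiagonalTuple q (L - 1),
        (Nat.multinomial Finset.univ b : ℝ) *
          (((Finset.univ.sup b : ℕ) : ℝ) + (if univ.sup b = b k then (1 : ℝ) else 0)) *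
          (P k ^ b k * ∏ i' ∈ univ.erase k, P i' ^ b i') := by
  rw [sum_antidiag_update hL k _ (fun a ha => by simp [ha]), Finset.mul_sum]
  refine Finset.sum_congr rfl fun b hb => ?_
  have hsum : ∑ i, b i = L - 1 := Finset.Nat.mem_antidiagonalTuple.1 hb
  have hmul : (b k + 1) * Nat.multinomial univ (Function.update b k (b k + 1))
      = L * Nat.multinomial univ b := by
    rw [multinomial_update_succ, hsum, Nat.sub_add_cancel hL]
  have hmulR : ((b k : ℝ) + 1) * (Nat.multinomial univ (Function.update b k (b k + 1)) : ℝ)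
      = (L : ℝ) * (Nat.multinomial univ b : ℝ) := by exact_mod_cast hmul
  have hprod : (∏ i' ∈ univ.erase k, P i' ^ (Function.update b k (b k + 1) i'))
      = ∏ i' ∈ univ.erase k, P i' ^ b i' :=
    Finset.prod_congr rfl fun i' hi' => by
      rw [Function.update_of_ne (Finset.ne_of_mem_erase hi')]
  have hub : Function.update b k (b k + 1) k = b k + 1 := Function.update_self ..
  rw [hub, hprod, Nat.add_sub_cancel, sup_update_succ b k]
  have hcast : ((univ.sup b + if univ.sup b = b k then 1 else 0 : ℕ) : ℝ)
      = ((univ.sup b : ℕ) : ℝ) + (if univ.sup b = b k then (1 : ℝ) else 0) := by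
    push_cast
    ring
  rw [hcast]
  push_cast
  linear_combination (((univ.sup b : ℕ) : ℝ) + (if univ.sup b = b k then (1 : ℝ) else 0)) *
    (∏ i' ∈ univ.erase k, P i' ^ b i') * P k ^ b k * hmulR

end Aux

theorem stmt4 (q L : ℕ) (hq : 2 ≤ q) (hL : 2 ≤ L) (P : Fin q → ℝ)
    (hP : ∀ i, 0 ≤ P i) (hPsum : ∑ i, P i = 1) (k j : Fin q) (hkj : k ≠ j)
    (hpkj : P j < P k) :
    let D : ℝ := (L : ℝ) *
      ∑ a ∈ (Finset.Nat.antidiagonalTuple q (L - 1)).filter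
          (fun a => a j < a k ∧ a k = Finset.univ.sup a),
        (Nat.multinomial Finset.univ a : ℝ) *
          (∏ i ∈ Finset.univ \ {k, j}, P i ^ a i) *
          (P k ^ a k * P j ^ a j - P k ^ a j * P j ^ a k)
    HasDerivAt (fun t => fqLpoly q L
        (fun i => P i + t * ((if i = k then (1 : ℝ) else 0) - (if i = j then 1 else 0))))
      D 0 ∧ 0 ≤ D := by
  intro D
  have hD : D = (L : ℝ) *
      ∑ a ∈ (Finset.Nat.antidiagonalTuple q (L - 1)).filter
          (fun a => a j < a k ∧ a k = Finset.univ.sup a),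
        (Nat.multinomial Finset.univ a : ℝ) *
          (∏ i ∈ Finset.univ \ {k, j}, P i ^ a i) *
          (P k ^ a k * P j ^ a j - P k ^ a j * P j ^ a k) := rfl
  have hL1 : 1 ≤ L := le_trans one_le_two hL
  -- the derivative with its raw value
  have hderiv : HasDerivAt (fun t => fqLpoly q L
      (fun i => P i + t * ((if i = k then (1 : ℝ) else 0) - (if i = j then 1 else 0))))
      (∑ a ∈ Finset.Nat.antidiagonalTuple q L,
        (Nat.multinomial Finset.univ a : ℝ) * ((Finset.univ.sup a : ℕ) : ℝ) *
          ∑ i, (∏ i' ∈ univ.erase i, P i' ^ a i') *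
            ((a i : ℝ) * P i ^ (a i - 1) *
              ((if i = k then (1 : ℝ) else 0) - (if i = j then 1 else 0)))) 0 := by
    show HasDerivAt (fun t => ∑ a ∈ Finset.Nat.antidiagonalTuple q L,
      (Nat.multinomial Finset.univ a : ℝ) * ((Finset.univ.sup a : ℕ) : ℝ) *
        ∏ i, (P i + t * ((if i = k then (1 : ℝ) else 0) - (if i = j then 1 else 0))) ^ a i) _ 0
    apply HasDerivAt.fun_sum
    intro a _
    have h1 : ∀ i ∈ (univ : Finset (Fin q)), HasDerivAt
        (fun t : ℝ => (P i + t * ((if i = k then (1 : ℝ) else 0) - (if i = j then 1 else 0))) ^ a i)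
        ((a i : ℝ) * P i ^ (a i - 1) *
          ((if i = k then (1 : ℝ) else 0) - (if i = j then 1 else 0))) 0 := by
      intro i _
      have h := (((hasDerivAt_id (0 : ℝ)).mul_const
        ((if i = k then (1 : ℝ) else 0) - (if i = j then 1 else 0))).const_add (P i)).fun_pow (a i)
      simpa using h
    have h2 := HasDerivAt.const_mul
      ((Nat.multinomial Finset.univ a : ℝ) * ((Finset.univ.sup a : ℕ) : ℝ))
      (HasDerivAt.finset_prod h1)
    simpa [smul_eq_mul] using h2
  -- inner sum simplification
  have hinner : ∀ a : Fin q → ℕ,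
      (∑ i, (∏ i' ∈ univ.erase i, P i' ^ a i') *
        ((a i : ℝ) * P i ^ (a i - 1) *
          ((if i = k then (1 : ℝ) else 0) - (if i = j then 1 else 0))))
      = (∏ i' ∈ univ.erase k, P i' ^ a i') * ((a k : ℝ) * P k ^ (a k - 1))
        - (∏ i' ∈ univ.erase j, P i' ^ a i') * ((a j : ℝ) * P j ^ (a j - 1)) := by
    intro a
    have hterm : ∀ i : Fin q, (∏ i' ∈ univ.erase i, P i' ^ a i') *
        ((a i : ℝ) * P i ^ (a i - 1) *
          ((if i = k then (1 : ℝ) else 0) - (if i = j then 1 else 0)))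
        = (if i = k then
            (∏ i' ∈ univ.erase i, P i' ^ a i') * ((a i : ℝ) * P i ^ (a i - 1)) else 0)
          - (if i = j then
            (∏ i' ∈ univ.erase i, P i' ^ a i') * ((a i : ℝ) * P i ^ (a i - 1)) else 0) := by
      intro i
      rcases eq_or_ne i k with rfl | h1
      · rw [if_pos rfl, if_pos rfl, if_neg hkj, if_neg hkj]
        ring
      · rcases eq_or_ne i j with rfl | h2
        · rw [if_neg h1, if_neg h1, if_pos rfl, if_pos rfl]
          ring
        · rw [if_neg h1, if_neg h1, if_neg h2, if_neg h2]
          ring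
    rw [Finset.sum_congr rfl fun i _ => hterm i, Finset.sum_sub_distrib,
        Finset.sum_ite_eq' univ k, Finset.sum_ite_eq' univ j]
    simp
  have hsetk : (univ.erase k) \ {j} = univ \ ({k, j} : Finset (Fin q)) := by
    ext i
    simp only [Finset.mem_sdiff, Finset.mem_erase, Finset.mem_univ, Finset.mem_singleton,
      Finset.mem_insert, and_true, true_and]
    tauto
  have hsetj : (univ.erase j) \ {k} = univ \ ({k, j} : Finset (Fin q)) := by
    ext i
    simp only [Finset.mem_sdiff, Finset.mem_erase, Finset.mem_univ, Finset.mem_singleton,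
      Finset.mem_insert, and_true, true_and]
    tauto
  have hsplitk : ∀ b : Fin q → ℕ, (∏ i' ∈ univ.erase k, P i' ^ b i')
      = P j ^ b j * ∏ i' ∈ univ \ {k, j}, P i' ^ b i' := by
    intro b
    rw [Finset.prod_eq_mul_prod_sdiff_singleton_of_mem
      (Finset.mem_erase.mpr ⟨Ne.symm hkj, Finset.mem_univ j⟩) (fun i' => P i' ^ b i'), hsetk]
  have hsplitj : ∀ b : Fin q → ℕ, (∏ i' ∈ univ.erase j, P i' ^ b i')
      = P k ^ b k * ∏ i' ∈ univ \ {k, j}, P i' ^ b i' := by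
    intro b
    rw [Finset.prod_eq_mul_prod_sdiff_singleton_of_mem
      (Finset.mem_erase.mpr ⟨hkj, Finset.mem_univ k⟩) (fun i' => P i' ^ b i'), hsetj]
  have hpoint : ∀ b : Fin q → ℕ,
      (Nat.multinomial Finset.univ b : ℝ) *
          (((Finset.univ.sup b : ℕ) : ℝ) + (if univ.sup b = b k then (1 : ℝ) else 0)) *
          (P k ^ b k * (P j ^ b j * ∏ i' ∈ univ \ {k, j}, P i' ^ b i'))
        - (Nat.multinomial Finset.univ b : ℝ) *
          (((Finset.univ.sup b : ℕ) : ℝ) + (if univ.sup b = b j then (1 : ℝ) else 0)) *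
          (P j ^ b j * (P k ^ b k * ∏ i' ∈ univ \ {k, j}, P i' ^ b i'))
      = (if b j < b k ∧ b k = univ.sup b then
          (Nat.multinomial Finset.univ b : ℝ) * (∏ i' ∈ univ \ {k, j}, P i' ^ b i') *
            (P k ^ b k * P j ^ b j) else 0)
        - (if b k < b j ∧ b j = univ.sup b then
          (Nat.multinomial Finset.univ b : ℝ) * (∏ i' ∈ univ \ {k, j}, P i' ^ b i') *
            (P k ^ b k * P j ^ b j) else 0) := by
    intro b
    have h1 : b k ≤ univ.sup b := Finset.le_sup (mem_univ k)
    have h2 : b j ≤ univ.sup b := Finset.le_sup (mem_univ j)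
    by_cases hk' : univ.sup b = b k <;> by_cases hj' : univ.sup b = b j
    · rw [if_pos hk', if_pos hj', if_neg (by omega), if_neg (by omega)]
      ring
    · rw [if_pos hk', if_neg hj', if_pos ⟨by omega, hk'.symm⟩,
        if_neg (by rintro ⟨h, _⟩; omega)]
      ring
    · rw [if_neg hk', if_pos hj', if_neg (by rintro ⟨h, _⟩; omega),
        if_pos ⟨by omega, hj'.symm⟩]
      ring
    · rw [if_neg hk', if_neg hj', if_neg (by rintro ⟨_, h⟩; exact hk' h.symm),
        if_neg (by rintro ⟨_, h⟩; exact hj' h.symm)]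
      ring
  have hswap : (∑ b ∈ (Finset.Nat.antidiagonalTuple q (L - 1)).filter
        (fun b => b k < b j ∧ b j = univ.sup b),
      (Nat.multinomial Finset.univ b : ℝ) * (∏ i' ∈ univ \ {k, j}, P i' ^ b i') *
        (P k ^ b k * P j ^ b j))
    = ∑ a ∈ (Finset.Nat.antidiagonalTuple q (L - 1)).filter
        (fun a => a j < a k ∧ a k = Finset.univ.sup a),
      (Nat.multinomial Finset.univ a : ℝ) * (∏ i' ∈ univ \ {k, j}, P i' ^ a i') *
        (P k ^ a j * P j ^ a k) := by
    refine Finset.sum_nbij' (fun b => fun i => b (Equiv.swap k j i))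
      (fun b => fun i => b (Equiv.swap k j i)) ?_ ?_ ?_ ?_ ?_
    · intro b hb
      rw [Finset.mem_filter, Finset.Nat.mem_antidiagonalTuple] at hb
      rw [Finset.mem_filter, Finset.Nat.mem_antidiagonalTuple]
      refine ⟨?_, ?_, ?_⟩
      · rw [Equiv.sum_comp (Equiv.swap k j) b]; exact hb.1
      · show b (Equiv.swap k j j) < b (Equiv.swap k j k)
        rw [Equiv.swap_apply_right, Equiv.swap_apply_left]
        exact hb.2.1
      · show b (Equiv.swap k j k) = univ.sup (fun i => b (Equiv.swap k j i))
        rw [Equiv.swap_apply_left, sup_comp_perm b (Equiv.swap k j)]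
        exact hb.2.2
    · intro b hb
      rw [Finset.mem_filter, Finset.Nat.mem_antidiagonalTuple] at hb
      rw [Finset.mem_filter, Finset.Nat.mem_antidiagonalTuple]
      refine ⟨?_, ?_, ?_⟩
      · rw [Equiv.sum_comp (Equiv.swap k j) b]; exact hb.1
      · show b (Equiv.swap k j k) < b (Equiv.swap k j j)
        rw [Equiv.swap_apply_right, Equiv.swap_apply_left]
        exact hb.2.1
      · show b (Equiv.swap k j j) = univ.sup (fun i => b (Equiv.swap k j i))
        rw [Equiv.swap_apply_right, sup_comp_perm b (Equiv.swap k j)]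
        exact hb.2.2
    · intro b _
      funext i
      show b (Equiv.swap k j (Equiv.swap k j i)) = b i
      rw [Equiv.swap_apply_self]
    · intro b _
      funext i
      show b (Equiv.swap k j (Equiv.swap k j i)) = b i
      rw [Equiv.swap_apply_self]
    · intro b hb
      have hM : Nat.multinomial Finset.univ (fun i => b (Equiv.swap k j i))
          = Nat.multinomial Finset.univ b := multinomial_comp_perm b (Equiv.swap k j)
      have hQ : (∏ i' ∈ univ \ {k, j}, P i' ^ (b (Equiv.swap k j i')))
          = ∏ i' ∈ univ \ {k, j}, P i' ^ b i' := by
        refine Finset.prod_congr rfl fun i' hi' => ?_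
        rw [Finset.mem_sdiff, Finset.mem_insert, Finset.mem_singleton] at hi'
        push_neg at hi'
        rw [Equiv.swap_apply_of_ne_of_ne hi'.2.1 hi'.2.2]
      show _ = (Nat.multinomial Finset.univ (fun i => b (Equiv.swap k j i)) : ℝ) *
          (∏ i' ∈ univ \ {k, j}, P i' ^ (b (Equiv.swap k j i'))) *
          (P k ^ (b (Equiv.swap k j j)) * P j ^ (b (Equiv.swap k j k)))
      rw [hM, hQ, Equiv.swap_apply_right, Equiv.swap_apply_left]
  have hE : (∑ a ∈ Finset.Nat.antidiagonalTuple q L,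
      (Nat.multinomial Finset.univ a : ℝ) * ((Finset.univ.sup a : ℕ) : ℝ) *
        ∑ i, (∏ i' ∈ univ.erase i, P i' ^ a i') *
          ((a i : ℝ) * P i ^ (a i - 1) *
            ((if i = k then (1 : ℝ) else 0) - (if i = j then 1 else 0)))) = D := by
    rw [hD]
    calc
      _ = ∑ a ∈ Finset.Nat.antidiagonalTuple q L,
            ((Nat.multinomial Finset.univ a : ℝ) * ((Finset.univ.sup a : ℕ) : ℝ) *
              ((∏ i' ∈ univ.erase k, P i' ^ a i') * ((a k : ℝ) * P k ^ (a k - 1)))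
            - (Nat.multinomial Finset.univ a : ℝ) * ((Finset.univ.sup a : ℕ) : ℝ) *
              ((∏ i' ∈ univ.erase j, P i' ^ a i') * ((a j : ℝ) * P j ^ (a j - 1)))) :=
        Finset.sum_congr rfl fun a _ => by rw [hinner a]; ring
      _ = (∑ a ∈ Finset.Nat.antidiagonalTuple q L,
            (Nat.multinomial Finset.univ a : ℝ) * ((Finset.univ.sup a : ℕ) : ℝ) *
              ((∏ i' ∈ univ.erase k, P i' ^ a i') * ((a k : ℝ) * P k ^ (a k - 1))))
          - (∑ a ∈ Finset.Nat.antidiagonalTuple q L,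
            (Nat.multinomial Finset.univ a : ℝ) * ((Finset.univ.sup a : ℕ) : ℝ) *
              ((∏ i' ∈ univ.erase j, P i' ^ a i') * ((a j : ℝ) * P j ^ (a j - 1)))) :=
        Finset.sum_sub_distrib _ _
      _ = (L : ℝ) * ∑ b ∈ Finset.Nat.antidiagonalTuple q (L - 1),
            ((Nat.multinomial Finset.univ b : ℝ) *
              (((Finset.univ.sup b : ℕ) : ℝ) + (if univ.sup b = b k then (1 : ℝ) else 0)) *
              (P k ^ b k * (P j ^ b j * ∏ i' ∈ univ \ {k, j}, P i' ^ b i'))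
            - (Nat.multinomial Finset.univ b : ℝ) *
              (((Finset.univ.sup b : ℕ) : ℝ) + (if univ.sup b = b j then (1 : ℝ) else 0)) *
              (P j ^ b j * (P k ^ b k * ∏ i' ∈ univ \ {k, j}, P i' ^ b i'))) := by
          rw [stepB hL1 P k, stepB hL1 P j, ← mul_sub, ← Finset.sum_sub_distrib]
          congr 1
          refine Finset.sum_congr rfl fun b _ => ?_
          rw [hsplitk b, hsplitj b]
      _ = (L : ℝ) * ∑ b ∈ Finset.Nat.antidiagonalTuple q (L - 1),
            ((if b j < b k ∧ b k = univ.sup b then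
              (Nat.multinomial Finset.univ b : ℝ) * (∏ i' ∈ univ \ {k, j}, P i' ^ b i') *
                (P k ^ b k * P j ^ b j) else 0)
            - (if b k < b j ∧ b j = univ.sup b then
              (Nat.multinomial Finset.univ b : ℝ) * (∏ i' ∈ univ \ {k, j}, P i' ^ b i') *
                (P k ^ b k * P j ^ b j) else 0)) := by
          congr 1
          exact Finset.sum_congr rfl fun b _ => hpoint b
      _ = (L : ℝ) * ((∑ b ∈ (Finset.Nat.antidiagonalTuple q (L - 1)).filter
              (fun b => b j < b k ∧ b k = univ.sup b),
              (Nat.multinomial Finset.univ b : ℝ) * (∏ i' ∈ univ \ {k, j}, P i' ^ b i') *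
                (P k ^ b k * P j ^ b j))
            - ∑ b ∈ (Finset.Nat.antidiagonalTuple q (L - 1)).filter
              (fun b => b k < b j ∧ b j = univ.sup b),
              (Nat.multinomial Finset.univ b : ℝ) * (∏ i' ∈ univ \ {k, j}, P i' ^ b i') *
                (P k ^ b k * P j ^ b j)) := by
          rw [Finset.sum_sub_distrib, ← Finset.sum_filter, ← Finset.sum_filter]
      _ = (L : ℝ) * ∑ a ∈ (Finset.Nat.antidiagonalTuple q (L - 1)).filter
            (fun a => a j < a k ∧ a k = Finset.univ.sup a),
            (Nat.multinomial Finset.univ a : ℝ) *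
              (∏ i ∈ Finset.univ \ {k, j}, P i ^ a i) *
              (P k ^ a k * P j ^ a j - P k ^ a j * P j ^ a k) := by
          rw [hswap, ← Finset.sum_sub_distrib]
          congr 1
          exact Finset.sum_congr rfl fun a _ => by
            have hfp : (fun b : Fin q → ℕ => b j < b k ∧ b k = univ.sup b)
                = (fun a : Fin q → ℕ => a j < a k ∧ a k = Finset.univ.sup a) := rfl
            ring
  have hD0 : 0 ≤ D := by
    rw [hD]
    apply mul_nonneg (Nat.cast_nonneg L)
    apply Finset.sum_nonneg
    intro a ha
    rw [Finset.mem_filter] at ha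
    have hja : a j < a k := ha.2.1
    apply mul_nonneg (mul_nonneg (Nat.cast_nonneg _)
      (Finset.prod_nonneg fun i _ => pow_nonneg (hP i) _))
    have h1 : P k ^ a k = P k ^ a j * P k ^ (a k - a j) := by
      rw [← pow_add]
      congr 1
      omega
    have h2 : P j ^ a k = P j ^ a j * P j ^ (a k - a j) := by
      rw [← pow_add]
      congr 1
      omega
    rw [h1, h2]
    have hle : P j ^ (a k - a j) ≤ P k ^ (a k - a j) := pow_le_pow_left₀ (hP j) hpkj.le _
    have hnn : 0 ≤ P k ^ a j * P j ^ a j :=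
      mul_nonneg (pow_nonneg (hP k) _) (pow_nonneg (hP j) _)
    nlinarith [mul_nonneg hnn (sub_nonneg.mpr hle)]
  exact ⟨hE ▸ hderiv, hD0⟩
end

section
/- Let q ≥ 2, L ≥ 2. The second derivative of g_{q,L}(w) = f_{q,L}(P_{q,w}) satisfies g_{q,L}''(w) = L(L−1)(w/(q−1))^{L−2} Σ_{a ∈ A_{q,L-2}} binom(L−2; a) ((q−1)(1−w)/w)^{a_q} G(a), where G(a) = (1/(q−1)^2) Σ_{i,j ∈ [q−1]} max{a+e_i+e_j} − (2/(q−1)) Σ_{i ∈ [q−1]} max{a+e_i+e_q} + max{a+2e_q}. -/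
open Finset

/-- The distribution `P_{q,w} = (w/(q−1), ..., w/(q−1), 1−w)`. -/
noncomputable def PqW (q : ℕ) (w : ℝ) : Fin q → ℝ :=
  fun i => if (i : ℕ) = q - 1 then 1 - w else w / ((q : ℝ) - 1)

/-- The `i`-th standard basis vector of `ℤ^q` (valued in `ℕ`). -/
def stdb {q : ℕ} (j : Fin q) : Fin q → ℕ := fun i => if i = j then 1 else 0

/-- The quantity
`G(a) = (1/(q−1)^2) Σ_{i,j∈[q−1]} max{a+e_i+e_j} − (2/(q−1)) Σ_{i∈[q−1]} max{a+e_i+e_q}`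
`        + max{a+2e_q}`. -/
noncomputable def Gfun (q : ℕ) (hq : 0 < q) (a : Fin q → ℕ) : ℝ :=
  let last : Fin q := ⟨q - 1, by omega⟩
  let lo : Finset (Fin q) := Finset.univ.filter fun i => (i : ℕ) < q - 1
  (1 / ((q : ℝ) - 1) ^ 2) *
      ∑ i ∈ lo, ∑ j ∈ lo,
        ((Finset.univ.sup (fun t => a t + stdb i t + stdb j t) : ℕ) : ℝ)
    - (2 / ((q : ℝ) - 1)) *
      ∑ i ∈ lo,
        ((Finset.univ.sup (fun t => a t + stdb i t + stdb last t) : ℕ) : ℝ)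
    + ((Finset.univ.sup (fun t => a t + 2 * stdb last t) : ℕ) : ℝ)

/-! ### Auxiliary lemmas -/

lemma desc_fact_mul (n k : ℕ) : (n + k).descFactorial k * n.factorial = (n + k).factorial := by
  induction k with
  | zero => simp
  | succ k ih =>
    have h : n + (k + 1) = (n + k) + 1 := by omega
    rw [h, Nat.succ_descFactorial_succ, mul_assoc, ih, Nat.factorial_succ]

lemma multinomial_add_eq {q : ℕ} (a c : Fin q → ℕ) (hc : ∑ t, c t = 2) :
    Nat.multinomial univ (fun t => a t + c t) * ∏ t, (a t + c t).descFactorial (c t)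
      = ((∑ t, a t) + 2) * ((∑ t, a t) + 1) * Nat.multinomial univ a := by
  have hpos : 0 < ∏ t, (a t).factorial := Finset.prod_pos fun t _ => Nat.factorial_pos _
  apply Nat.eq_of_mul_eq_mul_right hpos
  have s1 := Nat.multinomial_spec univ (fun t => a t + c t)
  have s2 := Nat.multinomial_spec univ a
  have hsum : ∑ t, (a t + c t) = (∑ t, a t) + 2 := by
    rw [Finset.sum_add_distrib, hc]
  calc Nat.multinomial univ (fun t => a t + c t) * (∏ t, (a t + c t).descFactorial (c t))
        * ∏ t, (a t).factorial
      = (∏ t, ((a t + c t).descFactorial (c t) * (a t).factorial))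
          * Nat.multinomial univ (fun t => a t + c t) := by
        rw [Finset.prod_mul_distrib]; ring
    _ = (∏ t, (a t + c t).factorial) * Nat.multinomial univ (fun t => a t + c t) := by
        congr 1; exact Finset.prod_congr rfl fun t _ => desc_fact_mul (a t) (c t)
    _ = ((∑ t, a t) + 2).factorial := by rw [s1, hsum]
    _ = ((∑ t, a t) + 2) * ((∑ t, a t) + 1) * (∑ t, a t).factorial := by
        rw [Nat.factorial_succ, Nat.factorial_succ]; ring
    _ = ((∑ t, a t) + 2) * ((∑ t, a t) + 1) * Nat.multinomial univ a * ∏ t, (a t).factorial := by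
        rw [← s2]; ring

lemma reindex {q : ℕ} (n : ℕ) (c : Fin q → ℕ) (hc : ∑ t, c t = 2) (F : (Fin q → ℕ) → ℝ) :
    ∑ b ∈ Finset.Nat.antidiagonalTuple q (n + 2),
        (Nat.multinomial univ b : ℝ) * ((∏ t, (b t).descFactorial (c t) : ℕ) : ℝ) * F b
      = ((n : ℝ) + 2) * ((n : ℝ) + 1) *
          ∑ a ∈ Finset.Nat.antidiagonalTuple q n,
            (Nat.multinomial univ a : ℝ) * F (fun t => a t + c t) := by
  classical
  set S := (Finset.Nat.antidiagonalTuple q n).image (fun a => fun t => a t + c t) with hS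
  have hsub : S ⊆ Finset.Nat.antidiagonalTuple q (n + 2) := by
    intro b hb
    rw [hS, Finset.mem_image] at hb
    obtain ⟨a, ha, rfl⟩ := hb
    rw [Finset.Nat.mem_antidiagonalTuple] at ha ⊢
    rw [Finset.sum_add_distrib, ha, hc]
  rw [← Finset.sum_subset hsub ?zero]
  case zero =>
    intro b hb hbS
    rw [Finset.Nat.mem_antidiagonalTuple] at hb
    have : ∃ t, b t < c t := by
      by_contra hno
      push_neg at hno
      apply hbS
      rw [hS, Finset.mem_image]
      refine ⟨fun t => b t - c t, ?_, ?_⟩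
      · rw [Finset.Nat.mem_antidiagonalTuple]
        have : ∑ t, (b t - c t) + ∑ t, c t = ∑ t, b t := by
          rw [← Finset.sum_add_distrib]
          exact Finset.sum_congr rfl fun t _ => by have := hno t; omega
        omega
      · funext t; show b t - c t + c t = b t; have := hno t; omega
    obtain ⟨t, ht⟩ := this
    have : ∏ t, (b t).descFactorial (c t) = 0 :=
      Finset.prod_eq_zero (Finset.mem_univ t) (Nat.descFactorial_eq_zero_iff_lt.mpr ht)
    rw [this]
    simp
  rw [hS, Finset.sum_image ?inj]
  case inj =>
    intro a _ a' _ h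
    funext t
    have := congrFun h t
    simpa using this
  rw [Finset.mul_sum]
  refine Finset.sum_congr rfl fun a ha => ?_
  rw [Finset.Nat.mem_antidiagonalTuple] at ha
  have key := multinomial_add_eq a c hc
  rw [ha] at key
  have h2 : ((Nat.multinomial univ fun t => a t + c t) * ∏ t, (a t + c t).descFactorial (c t) : ℕ)
      = ((n + 2) * (n + 1) * Nat.multinomial univ a : ℕ) := key
  have hcast : ((Nat.multinomial univ fun t => a t + c t : ℕ) : ℝ)
      * ((∏ t, (a t + c t).descFactorial (c t) : ℕ) : ℝ)
      = ((n : ℝ) + 2) * ((n : ℝ) + 1) * (Nat.multinomial univ a : ℝ) := by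
    rw [← Nat.cast_mul, h2]
    push_cast
    ring
  rw [hcast]
  ring

lemma desc_two_cast (n : ℕ) : ((n.descFactorial 2 : ℕ) : ℝ) = (n : ℝ) * ((n : ℝ) - 1) := by
  cases n with
  | zero => simp
  | succ n =>
    rw [Nat.succ_descFactorial_succ, Nat.descFactorial_one]
    push_cast
    ring

lemma descprod_pair {q : ℕ} (b : Fin q → ℕ) {i j : Fin q} (hij : i ≠ j) :
    ((∏ t, (b t).descFactorial (stdb i t + stdb j t) : ℕ) : ℝ) = (b i : ℝ) * (b j : ℝ) := by
  classical
  have h1 : ∏ t, (b t).descFactorial (stdb i t + stdb j t)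
      = (b i).descFactorial (stdb i i + stdb j i) *
        ∏ t ∈ univ.erase i, (b t).descFactorial (stdb i t + stdb j t) := by
    exact (Finset.mul_prod_erase univ _ (Finset.mem_univ i)).symm
  have hj : j ∈ univ.erase i := Finset.mem_erase.mpr ⟨Ne.symm hij, Finset.mem_univ j⟩
  have h2 : ∏ t ∈ univ.erase i, (b t).descFactorial (stdb i t + stdb j t)
      = (b j).descFactorial (stdb i j + stdb j j) *
        ∏ t ∈ (univ.erase i).erase j, (b t).descFactorial (stdb i t + stdb j t) := by
    exact (Finset.mul_prod_erase _ _ hj).symm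
  have h3 : ∏ t ∈ (univ.erase i).erase j, (b t).descFactorial (stdb i t + stdb j t) = 1 := by
    apply Finset.prod_eq_one
    intro t ht
    have hti : t ≠ i := (Finset.mem_erase.mp (Finset.mem_erase.mp ht).2).1
    have htj : t ≠ j := (Finset.mem_erase.mp ht).1
    simp [stdb, hti, htj]
  rw [h1, h2, h3, mul_one]
  simp [stdb, hij, Ne.symm hij]

lemma descprod_same {q : ℕ} (b : Fin q → ℕ) (i : Fin q) :
    ((∏ t, (b t).descFactorial (stdb i t + stdb i t) : ℕ) : ℝ)
      = (b i : ℝ) * ((b i : ℝ) - 1) := by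
  classical
  have h1 : ∏ t, (b t).descFactorial (stdb i t + stdb i t)
      = (b i).descFactorial (stdb i i + stdb i i) *
        ∏ t ∈ univ.erase i, (b t).descFactorial (stdb i t + stdb i t) := by
    exact (Finset.mul_prod_erase univ _ (Finset.mem_univ i)).symm
  have h3 : ∏ t ∈ univ.erase i, (b t).descFactorial (stdb i t + stdb i t) = 1 := by
    apply Finset.prod_eq_one
    intro t ht
    have hti : t ≠ i := (Finset.mem_erase.mp ht).1
    simp [stdb, hti]
  rw [h1, h3, mul_one]
  have h : stdb i i + stdb i i = 2 := by simp [stdb]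
  rw [h, desc_two_cast]

lemma descprod_twice {q : ℕ} (b : Fin q → ℕ) (i : Fin q) :
    ((∏ t, (b t).descFactorial (2 * stdb i t) : ℕ) : ℝ)
      = (b i : ℝ) * ((b i : ℝ) - 1) := by
  have h : ∀ t, 2 * stdb i t = stdb i t + stdb i t := fun t => by ring
  simp only [h]
  exact descprod_same b i

lemma filter_not_lt (q : ℕ) (hq : 0 < q) :
    univ.filter (fun i : Fin q => ¬ (i : ℕ) < q - 1) = {⟨q - 1, by omega⟩} := by
  ext i
  simp only [Finset.mem_filter, Finset.mem_univ, true_and, Finset.mem_singleton, not_lt,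
    Fin.ext_iff]
  have := i.isLt
  omega

lemma sum_split {q : ℕ} (hq : 0 < q) (b : Fin q → ℕ) :
    ∑ t, b t = (∑ t ∈ univ.filter (fun i : Fin q => (i : ℕ) < q - 1), b t)
      + b ⟨q - 1, by omega⟩ := by
  classical
  rw [← Finset.sum_filter_add_sum_filter_not univ (fun i : Fin q => (i : ℕ) < q - 1) b,
    filter_not_lt q hq, Finset.sum_singleton]

lemma prod_PqW {q : ℕ} (hq : 0 < q) (w : ℝ) (b : Fin q → ℕ) :
    ∏ i, PqW q w i ^ b i
      = (w / ((q : ℝ) - 1)) ^ (∑ t ∈ univ.filter (fun i : Fin q => (i : ℕ) < q - 1), b t)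
        * (1 - w) ^ (b ⟨q - 1, by omega⟩) := by
  classical
  rw [← Finset.prod_filter_mul_prod_filter_not univ (fun i : Fin q => (i : ℕ) < q - 1)
    (fun i => PqW q w i ^ b i), filter_not_lt q hq, Finset.prod_singleton]
  congr 1
  · rw [← Finset.prod_pow_eq_pow_sum]
    refine Finset.prod_congr rfl fun i hi => ?_
    rw [Finset.mem_filter] at hi
    have : (i : ℕ) ≠ q - 1 := by omega
    simp [PqW, this]
  · simp [PqW]

noncomputable def T0 (r w : ℝ) (m k : ℕ) : ℝ := (w / r) ^ m * (1 - w) ^ k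
noncomputable def T1 (r w : ℝ) (m k : ℕ) : ℝ :=
  (m : ℝ) * (1 / r) * T0 r w (m - 1) k - (k : ℝ) * T0 r w m (k - 1)
noncomputable def T2 (r w : ℝ) (m k : ℕ) : ℝ :=
  (m : ℝ) * (1 / r) * T1 r w (m - 1) k - (k : ℝ) * T1 r w m (k - 1)

lemma hasDerivAt_T0 (r : ℝ) (m k : ℕ) (w : ℝ) :
    HasDerivAt (fun x => T0 r x m k) (T1 r w m k) w := by
  have h1 : HasDerivAt (fun x : ℝ => (x / r) ^ m) ((m : ℝ) * (w / r) ^ (m - 1) * (1 / r)) w :=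
    ((hasDerivAt_id w).div_const r).pow m
  have h2 : HasDerivAt (fun x : ℝ => (1 - x) ^ k) ((k : ℝ) * (1 - w) ^ (k - 1) * (-1)) w := by
    simpa using ((hasDerivAt_const w (1 : ℝ)).fun_sub (hasDerivAt_id w)).fun_pow k
  have : HasDerivAt (fun x : ℝ => (x / r) ^ m * (1 - x) ^ k) _ w := h1.fun_mul h2
  convert this using 1
  · rfl
  simp only [T0, T1]
  ring

lemma hasDerivAt_T1 (r : ℝ) (m k : ℕ) (w : ℝ) :
    HasDerivAt (fun x => T1 r x m k) (T2 r w m k) w := by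
  have h1 := (hasDerivAt_T0 r (m - 1) k w).const_mul ((m : ℝ) * (1 / r))
  have h2 := (hasDerivAt_T0 r m (k - 1) w).const_mul ((k : ℝ))
  simpa only [T1, T2] using h1.fun_sub h2

lemma cast_pred_mul (n : ℕ) : (n : ℝ) * ((n - 1 : ℕ) : ℝ) = (n : ℝ) * ((n : ℝ) - 1) := by
  cases n with
  | zero => simp
  | succ n => push_cast; ring

lemma pow_convert {r w : ℝ} (hr : r ≠ 0) (hw : w ≠ 0) (m k : ℕ) :
    (w / r) ^ (m + k) * (r * (1 - w) / w) ^ k = (w / r) ^ m * (1 - w) ^ k := by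
  rw [pow_add, mul_assoc, ← mul_pow]
  congr 2
  field_simp

lemma per_a_lemma (q L : ℕ) (hq0 : 0 < q) {r w : ℝ} (hr : r ≠ 0) (hw : w ≠ 0)
    (c : Fin q → ℕ) (hc : ∑ t, c t = 2) (d : ℕ)
    (hd : c ⟨q - 1, by omega⟩ = d)
    (a : Fin q → ℕ) (ha : ∑ i, a i = L - 2) :
    (Nat.multinomial univ a : ℝ) *
        ((w / r) ^ (L - 2) * (r * (1 - w) / w) ^ (a ⟨q - 1, by omega⟩))
        * ((univ.sup (fun t => a t + c t) : ℕ) : ℝ)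
      = (Nat.multinomial univ a : ℝ) *
          (((univ.sup (fun t => a t + c t) : ℕ) : ℝ) *
            T0 r w ((∑ t ∈ univ.filter (fun i : Fin q => (i : ℕ) < q - 1), (a t + c t)) - (2 - d))
              ((a ⟨q - 1, by omega⟩ + c ⟨q - 1, by omega⟩) - d)) := by
  have hsa := sum_split hq0 a
  rw [ha] at hsa
  have hsc := sum_split hq0 c
  rw [hc, hd] at hsc
  have h1 : (∑ t ∈ univ.filter (fun i : Fin q => (i : ℕ) < q - 1), (a t + c t)) - (2 - d)
      = ∑ t ∈ univ.filter (fun i : Fin q => (i : ℕ) < q - 1), a t := by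
    rw [Finset.sum_add_distrib]
    omega
  have h2 : (a ⟨q - 1, by omega⟩ + c ⟨q - 1, by omega⟩) - d = a ⟨q - 1, by omega⟩ := by
    omega
  rw [h1, h2, hsa, pow_convert hr hw]
  simp only [T0]
  ring

lemma group_lemma (q L : ℕ) (hq0 : 0 < q) (hL : 2 ≤ L) {r w : ℝ} (hr : r ≠ 0) (hw : w ≠ 0)
    (c : Fin q → ℕ) (hc : ∑ t, c t = 2) (d : ℕ)
    (hd : c ⟨q - 1, by omega⟩ = d) :
    ((L : ℝ) * ((L : ℝ) - 1)) * ∑ a ∈ Finset.Nat.antidiagonalTuple q (L - 2),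
        (Nat.multinomial univ a : ℝ) *
          ((w / r) ^ (L - 2) * (r * (1 - w) / w) ^ (a ⟨q - 1, by omega⟩))
          * ((univ.sup (fun t => a t + c t) : ℕ) : ℝ)
      = ∑ b ∈ Finset.Nat.antidiagonalTuple q L,
          (Nat.multinomial univ b : ℝ) * ((∏ t, (b t).descFactorial (c t) : ℕ) : ℝ) *
            (((univ.sup b : ℕ) : ℝ) *
              T0 r w ((∑ t ∈ univ.filter (fun i : Fin q => (i : ℕ) < q - 1), b t) - (2 - d))
                ((b ⟨q - 1, by omega⟩) - d)) := by
  have hL2 : L - 2 + 2 = L := by omega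
  have hre := reindex (q := q) (L - 2) c hc
      (fun b => ((univ.sup b : ℕ) : ℝ) *
        T0 r w ((∑ t ∈ univ.filter (fun i : Fin q => (i : ℕ) < q - 1), b t) - (2 - d))
          ((b ⟨q - 1, by omega⟩) - d))
  rw [hL2] at hre
  rw [hre]
  have hcastL : ((L - 2 : ℕ) : ℝ) = (L : ℝ) - 2 := by
    push_cast [Nat.cast_sub hL]
    ring
  rw [hcastL, show ((L : ℝ) - 2 + 2) = (L : ℝ) by ring,
    show ((L : ℝ) - 2 + 1) = (L : ℝ) - 1 by ring]
  congr 1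
  refine Finset.sum_congr rfl fun a ha => ?_
  rw [Finset.Nat.mem_antidiagonalTuple] at ha
  have key := per_a_lemma q L hq0 hr hw c hc d hd a ha
  simp only []
  exact key

lemma sum_descprod_pairs {q : ℕ} (b : Fin q → ℕ) :
    ∑ i ∈ univ.filter (fun i : Fin q => (i : ℕ) < q - 1),
      ∑ j ∈ univ.filter (fun i : Fin q => (i : ℕ) < q - 1),
        ((∏ t, (b t).descFactorial (stdb i t + stdb j t) : ℕ) : ℝ)
      = ((∑ t ∈ univ.filter (fun i : Fin q => (i : ℕ) < q - 1), b t : ℕ) : ℝ) ^ 2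
        - ((∑ t ∈ univ.filter (fun i : Fin q => (i : ℕ) < q - 1), b t : ℕ) : ℝ) := by
  classical
  set lo := univ.filter (fun i : Fin q => (i : ℕ) < q - 1) with hlo
  have step : ∀ i ∈ lo, ∑ j ∈ lo, ((∏ t, (b t).descFactorial (stdb i t + stdb j t) : ℕ) : ℝ)
      = (b i : ℝ) * ((∑ t ∈ lo, b t : ℕ) : ℝ) - (b i : ℝ) := by
    intro i hi
    have hterm : ∀ j ∈ lo, ((∏ t, (b t).descFactorial (stdb i t + stdb j t) : ℕ) : ℝ)
        = (b i : ℝ) * (b j : ℝ) - (if i = j then (b i : ℝ) else 0) := by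
      intro j hj
      by_cases h : i = j
      · subst h
        rw [descprod_same]
        simp
        ring
      · rw [descprod_pair b h]
        simp [h]
    rw [Finset.sum_congr rfl hterm, Finset.sum_sub_distrib, Finset.sum_ite_eq lo i
      (fun _ => (b i : ℝ)), if_pos hi, ← Finset.mul_sum]
    push_cast
    ring
  rw [Finset.sum_congr rfl step, Finset.sum_sub_distrib, ← Finset.sum_mul]
  push_cast
  ring

lemma sum_descprod_last {q : ℕ} (hq0 : 0 < q) (b : Fin q → ℕ) :
    ∑ i ∈ univ.filter (fun i : Fin q => (i : ℕ) < q - 1),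
        ((∏ t, (b t).descFactorial (stdb i t + stdb ⟨q - 1, by omega⟩ t) : ℕ) : ℝ)
      = ((∑ t ∈ univ.filter (fun i : Fin q => (i : ℕ) < q - 1), b t : ℕ) : ℝ)
        * ((b ⟨q - 1, by omega⟩ : ℕ) : ℝ) := by
  classical
  have step : ∀ i ∈ univ.filter (fun i : Fin q => (i : ℕ) < q - 1),
      ((∏ t, (b t).descFactorial (stdb i t + stdb ⟨q - 1, by omega⟩ t) : ℕ) : ℝ)
        = (b i : ℝ) * ((b ⟨q - 1, by omega⟩ : ℕ) : ℝ) := by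
    intro i hi
    rw [Finset.mem_filter] at hi
    have hlast : i ≠ ⟨q - 1, by omega⟩ := by
      intro h
      rw [Fin.ext_iff] at h
      simp at h
      omega
    exact descprod_pair b hlast
  rw [Finset.sum_congr rfl step, ← Finset.sum_mul]
  push_cast
  ring

lemma combine_per_b (r w : ℝ) (M S : ℝ) (m k : ℕ) :
    (1 / r ^ 2) * ((M * (((m : ℝ)) ^ 2 - (m : ℝ))) * (S * T0 r w (m - 2) k))
      - (2 / r) * ((M * ((m : ℝ) * (k : ℝ))) * (S * T0 r w (m - 1) (k - 1)))
      + (M * (((k : ℝ)) ^ 2 - (k : ℝ))) * (S * T0 r w m (k - 2))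
    = M * S * T2 r w m k := by
  simp only [T2, T1]
  have e1 : m - 1 - 1 = m - 2 := by omega
  have e2 : k - 1 - 1 = k - 2 := by omega
  rw [e1, e2]
  have hx := cast_pred_mul m
  have hy := cast_pred_mul k
  linear_combination (-(M * S * T0 r w (m - 2) k) * (1 / r) * (1 / r)) * hx
    + (-(M * S * T0 r w m (k - 2))) * hy


lemma sum_stdb {q : ℕ} (i : Fin q) : ∑ t, stdb i t = 1 := by
  simp [stdb]

lemma sum_comm3 {α β γ : Type*} (s : Finset α) (t : Finset β) (u : Finset γ)
    (f : α → β → γ → ℝ) :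
    ∑ x ∈ s, ∑ y ∈ t, ∑ z ∈ u, f x y z = ∑ z ∈ u, ∑ x ∈ s, ∑ y ∈ t, f x y z :=
  calc ∑ x ∈ s, ∑ y ∈ t, ∑ z ∈ u, f x y z
      = ∑ x ∈ s, ∑ z ∈ u, ∑ y ∈ t, f x y z :=
        Finset.sum_congr rfl fun x _ => Finset.sum_comm
    _ = ∑ z ∈ u, ∑ x ∈ s, ∑ y ∈ t, f x y z := Finset.sum_comm

lemma wrapper1 (q L : ℕ) (hq0 : 0 < q) (hL : 2 ≤ L) {w : ℝ} (hr : ((q : ℝ) - 1) ≠ 0) (hw : w ≠ 0)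
    (i j : Fin q) (hi : (i : ℕ) < q - 1) (hj : (j : ℕ) < q - 1) :
    ∑ a ∈ Finset.Nat.antidiagonalTuple q (L - 2), (L : ℝ) * ((L : ℝ) - 1) * ((Nat.multinomial univ a : ℝ) * ((w / ((q : ℝ) - 1)) ^ (L - 2) * (((q : ℝ) - 1) * (1 - w) / w) ^ (a (⟨q - 1, Nat.sub_lt hq0 Nat.one_pos⟩ : Fin q))) * ((univ.sup (fun t => a t + (stdb i t + stdb j t)) : ℕ) : ℝ))
      = ∑ b ∈ Finset.Nat.antidiagonalTuple q L, (Nat.multinomial univ b : ℝ) * ((∏ t, (b t).descFactorial (stdb i t + stdb j t) : ℕ) : ℝ) * (((univ.sup b : ℕ) : ℝ) * T0 ((q : ℝ) - 1) w ((∑ t ∈ univ.filter (fun i : Fin q => (i : ℕ) < q - 1), b t) - 2) (b (⟨q - 1, Nat.sub_lt hq0 Nat.one_pos⟩ : Fin q))) := by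
  rw [← Finset.mul_sum]
  have hc : ∑ t, (stdb i t + stdb j t) = 2 := by
    rw [Finset.sum_add_distrib, sum_stdb, sum_stdb]
  have hnei : (⟨q - 1, Nat.sub_lt hq0 Nat.one_pos⟩ : Fin q) ≠ i := Fin.ne_of_val_ne (show q - 1 ≠ (i : ℕ) by omega)
  have hnej : (⟨q - 1, Nat.sub_lt hq0 Nat.one_pos⟩ : Fin q) ≠ j := Fin.ne_of_val_ne (show q - 1 ≠ (j : ℕ) by omega)
  have hd : stdb i (⟨q - 1, Nat.sub_lt hq0 Nat.one_pos⟩ : Fin q) + stdb j (⟨q - 1, Nat.sub_lt hq0 Nat.one_pos⟩ : Fin q) = 0 := by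
    simp only [stdb, if_neg hnei, if_neg hnej]
  have key := group_lemma q L hq0 hL hr hw (fun t => stdb i t + stdb j t) hc 0 hd
  simpa only [Nat.sub_zero] using key

lemma wrapper2 (q L : ℕ) (hq0 : 0 < q) (hL : 2 ≤ L) {w : ℝ} (hr : ((q : ℝ) - 1) ≠ 0) (hw : w ≠ 0)
    (i : Fin q) (hi : (i : ℕ) < q - 1) :
    ∑ a ∈ Finset.Nat.antidiagonalTuple q (L - 2), (L : ℝ) * ((L : ℝ) - 1) * ((Nat.multinomial univ a : ℝ) * ((w / ((q : ℝ) - 1)) ^ (L - 2) * (((q : ℝ) - 1) * (1 - w) / w) ^ (a (⟨q - 1, Nat.sub_lt hq0 Nat.one_pos⟩ : Fin q))) * ((univ.sup (fun t => a t + (stdb i t + stdb (⟨q - 1, Nat.sub_lt hq0 Nat.one_pos⟩ : Fin q) t)) : ℕ) : ℝ))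
      = ∑ b ∈ Finset.Nat.antidiagonalTuple q L, (Nat.multinomial univ b : ℝ) * ((∏ t, (b t).descFactorial (stdb i t + stdb (⟨q - 1, Nat.sub_lt hq0 Nat.one_pos⟩ : Fin q) t) : ℕ) : ℝ) * (((univ.sup b : ℕ) : ℝ) * T0 ((q : ℝ) - 1) w ((∑ t ∈ univ.filter (fun i : Fin q => (i : ℕ) < q - 1), b t) - 1) (b (⟨q - 1, Nat.sub_lt hq0 Nat.one_pos⟩ : Fin q) - 1)) := by
  rw [← Finset.mul_sum]
  have hc : ∑ t, (stdb i t + stdb (⟨q - 1, Nat.sub_lt hq0 Nat.one_pos⟩ : Fin q) t) = 2 := by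
    rw [Finset.sum_add_distrib, sum_stdb, sum_stdb]
  have hnei : (⟨q - 1, Nat.sub_lt hq0 Nat.one_pos⟩ : Fin q) ≠ i := Fin.ne_of_val_ne (show q - 1 ≠ (i : ℕ) by omega)
  have hd : stdb i (⟨q - 1, Nat.sub_lt hq0 Nat.one_pos⟩ : Fin q) + stdb (⟨q - 1, Nat.sub_lt hq0 Nat.one_pos⟩ : Fin q) (⟨q - 1, Nat.sub_lt hq0 Nat.one_pos⟩ : Fin q) = 1 := by
    simp only [stdb, if_neg hnei, if_pos rfl]
    norm_num
  have key := group_lemma q L hq0 hL hr hw (fun t => stdb i t + stdb (⟨q - 1, Nat.sub_lt hq0 Nat.one_pos⟩ : Fin q) t) hc 1 hd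
  simpa only [show (2 : ℕ) - 1 = 1 by norm_num] using key

lemma wrapper3 (q L : ℕ) (hq0 : 0 < q) (hL : 2 ≤ L) {w : ℝ} (hr : ((q : ℝ) - 1) ≠ 0) (hw : w ≠ 0) :
    ∑ a ∈ Finset.Nat.antidiagonalTuple q (L - 2), (L : ℝ) * ((L : ℝ) - 1) * ((Nat.multinomial univ a : ℝ) * ((w / ((q : ℝ) - 1)) ^ (L - 2) * (((q : ℝ) - 1) * (1 - w) / w) ^ (a (⟨q - 1, Nat.sub_lt hq0 Nat.one_pos⟩ : Fin q))) * ((univ.sup (fun t => a t + 2 * stdb (⟨q - 1, Nat.sub_lt hq0 Nat.one_pos⟩ : Fin q) t) : ℕ) : ℝ))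
      = ∑ b ∈ Finset.Nat.antidiagonalTuple q L, (Nat.multinomial univ b : ℝ) * ((∏ t, (b t).descFactorial (2 * stdb (⟨q - 1, Nat.sub_lt hq0 Nat.one_pos⟩ : Fin q) t) : ℕ) : ℝ) * (((univ.sup b : ℕ) : ℝ) * T0 ((q : ℝ) - 1) w (∑ t ∈ univ.filter (fun i : Fin q => (i : ℕ) < q - 1), b t) (b (⟨q - 1, Nat.sub_lt hq0 Nat.one_pos⟩ : Fin q) - 2)) := by
  rw [← Finset.mul_sum]
  have hc : ∑ t, (2 * stdb (⟨q - 1, Nat.sub_lt hq0 Nat.one_pos⟩ : Fin q) t) = 2 := by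
    rw [← Finset.mul_sum, sum_stdb]
    norm_num
  have hd : 2 * stdb (⟨q - 1, Nat.sub_lt hq0 Nat.one_pos⟩ : Fin q) (⟨q - 1, Nat.sub_lt hq0 Nat.one_pos⟩ : Fin q) = 2 := by
    simp only [stdb, if_pos rfl]
    norm_num
  have key := group_lemma q L hq0 hL hr hw (fun t => 2 * stdb (⟨q - 1, Nat.sub_lt hq0 Nat.one_pos⟩ : Fin q) t) hc 2 hd
  simpa only [Nat.sub_self, Nat.sub_zero] using key

lemma per_a_distribute (q L : ℕ) (hq0 : 0 < q) (w : ℝ) (a : Fin q → ℕ) :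
    (L : ℝ) * ((L : ℝ) - 1) * (w / ((q : ℝ) - 1)) ^ (L - 2) * ((Nat.multinomial univ a : ℝ) * (((q : ℝ) - 1) * (1 - w) / w) ^ (a (⟨q - 1, Nat.sub_lt hq0 Nat.one_pos⟩ : Fin q)) * Gfun q hq0 a)
      = (1 / ((q : ℝ) - 1) ^ 2) * (∑ i ∈ univ.filter (fun i : Fin q => (i : ℕ) < q - 1), ∑ j ∈ univ.filter (fun i : Fin q => (i : ℕ) < q - 1), (L : ℝ) * ((L : ℝ) - 1) * ((Nat.multinomial univ a : ℝ) * ((w / ((q : ℝ) - 1)) ^ (L - 2) * (((q : ℝ) - 1) * (1 - w) / w) ^ (a (⟨q - 1, Nat.sub_lt hq0 Nat.one_pos⟩ : Fin q))) * ((univ.sup (fun t => a t + (stdb i t + stdb j t)) : ℕ) : ℝ)))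
        - (2 / ((q : ℝ) - 1)) * (∑ i ∈ univ.filter (fun i : Fin q => (i : ℕ) < q - 1), (L : ℝ) * ((L : ℝ) - 1) * ((Nat.multinomial univ a : ℝ) * ((w / ((q : ℝ) - 1)) ^ (L - 2) * (((q : ℝ) - 1) * (1 - w) / w) ^ (a (⟨q - 1, Nat.sub_lt hq0 Nat.one_pos⟩ : Fin q))) * ((univ.sup (fun t => a t + (stdb i t + stdb (⟨q - 1, Nat.sub_lt hq0 Nat.one_pos⟩ : Fin q) t)) : ℕ) : ℝ)))
        + (L : ℝ) * ((L : ℝ) - 1) * ((Nat.multinomial univ a : ℝ) * ((w / ((q : ℝ) - 1)) ^ (L - 2) * (((q : ℝ) - 1) * (1 - w) / w) ^ (a (⟨q - 1, Nat.sub_lt hq0 Nat.one_pos⟩ : Fin q))) * ((univ.sup (fun t => a t + 2 * stdb (⟨q - 1, Nat.sub_lt hq0 Nat.one_pos⟩ : Fin q) t) : ℕ) : ℝ)) := by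
  have gf : Gfun q hq0 a
      = (1 / ((q : ℝ) - 1) ^ 2) * (∑ i ∈ univ.filter (fun i : Fin q => (i : ℕ) < q - 1), ∑ j ∈ univ.filter (fun i : Fin q => (i : ℕ) < q - 1), ((univ.sup (fun t => a t + (stdb i t + stdb j t)) : ℕ) : ℝ))
        - (2 / ((q : ℝ) - 1)) * (∑ i ∈ univ.filter (fun i : Fin q => (i : ℕ) < q - 1), ((univ.sup (fun t => a t + (stdb i t + stdb (⟨q - 1, Nat.sub_lt hq0 Nat.one_pos⟩ : Fin q) t)) : ℕ) : ℝ))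
        + ((univ.sup (fun t => a t + 2 * stdb (⟨q - 1, Nat.sub_lt hq0 Nat.one_pos⟩ : Fin q) t) : ℕ) : ℝ) := by
    simp only [Gfun, add_assoc]
  rw [gf]
  simp only [← Finset.mul_sum]
  ring

lemma per_b_final (q L : ℕ) (hq0 : 0 < q) (w : ℝ) (b : Fin q → ℕ) :
    (1 / ((q : ℝ) - 1) ^ 2) * (∑ i ∈ univ.filter (fun i : Fin q => (i : ℕ) < q - 1), ∑ j ∈ univ.filter (fun i : Fin q => (i : ℕ) < q - 1), (Nat.multinomial univ b : ℝ) * ((∏ t, (b t).descFactorial (stdb i t + stdb j t) : ℕ) : ℝ) * (((univ.sup b : ℕ) : ℝ) * T0 ((q : ℝ) - 1) w ((∑ t ∈ univ.filter (fun i : Fin q => (i : ℕ) < q - 1), b t) - 2) (b (⟨q - 1, Nat.sub_lt hq0 Nat.one_pos⟩ : Fin q))))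
      - (2 / ((q : ℝ) - 1)) * (∑ i ∈ univ.filter (fun i : Fin q => (i : ℕ) < q - 1), (Nat.multinomial univ b : ℝ) * ((∏ t, (b t).descFactorial (stdb i t + stdb (⟨q - 1, Nat.sub_lt hq0 Nat.one_pos⟩ : Fin q) t) : ℕ) : ℝ) * (((univ.sup b : ℕ) : ℝ) * T0 ((q : ℝ) - 1) w ((∑ t ∈ univ.filter (fun i : Fin q => (i : ℕ) < q - 1), b t) - 1) (b (⟨q - 1, Nat.sub_lt hq0 Nat.one_pos⟩ : Fin q) - 1)))
      + (Nat.multinomial univ b : ℝ) * ((∏ t, (b t).descFactorial (2 * stdb (⟨q - 1, Nat.sub_lt hq0 Nat.one_pos⟩ : Fin q) t) : ℕ) : ℝ) * (((univ.sup b : ℕ) : ℝ) * T0 ((q : ℝ) - 1) w (∑ t ∈ univ.filter (fun i : Fin q => (i : ℕ) < q - 1), b t) (b (⟨q - 1, Nat.sub_lt hq0 Nat.one_pos⟩ : Fin q) - 2))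
    = (Nat.multinomial univ b : ℝ) * ((univ.sup b : ℕ) : ℝ) * T2 ((q : ℝ) - 1) w (∑ t ∈ univ.filter (fun i : Fin q => (i : ℕ) < q - 1), b t) (b (⟨q - 1, Nat.sub_lt hq0 Nat.one_pos⟩ : Fin q)) := by
  simp only [← Finset.sum_mul, ← Finset.mul_sum]
  rw [sum_descprod_pairs b, sum_descprod_last hq0 b, descprod_twice b]
  linear_combination combine_per_b ((q : ℝ) - 1) w (Nat.multinomial univ b : ℝ) ((univ.sup b : ℕ) : ℝ) (∑ t ∈ univ.filter (fun i : Fin q => (i : ℕ) < q - 1), b t) (b (⟨q - 1, Nat.sub_lt hq0 Nat.one_pos⟩ : Fin q))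

lemma main_rhs_eq (q L : ℕ) (hq0 : 0 < q) (hL : 2 ≤ L) {w : ℝ} (hr : ((q : ℝ) - 1) ≠ 0) (hw : w ≠ 0) :
    (L : ℝ) * ((L : ℝ) - 1) * (w / ((q : ℝ) - 1)) ^ (L - 2) *
        ∑ a ∈ Finset.Nat.antidiagonalTuple q (L - 2), (Nat.multinomial univ a : ℝ) * (((q : ℝ) - 1) * (1 - w) / w) ^ (a (⟨q - 1, Nat.sub_lt hq0 Nat.one_pos⟩ : Fin q)) * Gfun q hq0 a
      = ∑ b ∈ Finset.Nat.antidiagonalTuple q L, (Nat.multinomial univ b : ℝ) * ((univ.sup b : ℕ) : ℝ) * T2 ((q : ℝ) - 1) w (∑ t ∈ univ.filter (fun i : Fin q => (i : ℕ) < q - 1), b t) (b (⟨q - 1, Nat.sub_lt hq0 Nat.one_pos⟩ : Fin q)) := by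
  have sw1 : (∑ a ∈ Finset.Nat.antidiagonalTuple q (L - 2), ∑ i ∈ univ.filter (fun i : Fin q => (i : ℕ) < q - 1), ∑ j ∈ univ.filter (fun i : Fin q => (i : ℕ) < q - 1), (L : ℝ) * ((L : ℝ) - 1) * ((Nat.multinomial univ a : ℝ) * ((w / ((q : ℝ) - 1)) ^ (L - 2) * (((q : ℝ) - 1) * (1 - w) / w) ^ (a (⟨q - 1, Nat.sub_lt hq0 Nat.one_pos⟩ : Fin q))) * ((univ.sup (fun t => a t + (stdb i t + stdb j t)) : ℕ) : ℝ)))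
      = ∑ i ∈ univ.filter (fun i : Fin q => (i : ℕ) < q - 1), ∑ j ∈ univ.filter (fun i : Fin q => (i : ℕ) < q - 1), ∑ a ∈ Finset.Nat.antidiagonalTuple q (L - 2), (L : ℝ) * ((L : ℝ) - 1) * ((Nat.multinomial univ a : ℝ) * ((w / ((q : ℝ) - 1)) ^ (L - 2) * (((q : ℝ) - 1) * (1 - w) / w) ^ (a (⟨q - 1, Nat.sub_lt hq0 Nat.one_pos⟩ : Fin q))) * ((univ.sup (fun t => a t + (stdb i t + stdb j t)) : ℕ) : ℝ)) := (sum_comm3 _ _ _ _).symm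
  have sw2 : (∑ a ∈ Finset.Nat.antidiagonalTuple q (L - 2), ∑ i ∈ univ.filter (fun i : Fin q => (i : ℕ) < q - 1), (L : ℝ) * ((L : ℝ) - 1) * ((Nat.multinomial univ a : ℝ) * ((w / ((q : ℝ) - 1)) ^ (L - 2) * (((q : ℝ) - 1) * (1 - w) / w) ^ (a (⟨q - 1, Nat.sub_lt hq0 Nat.one_pos⟩ : Fin q))) * ((univ.sup (fun t => a t + (stdb i t + stdb (⟨q - 1, Nat.sub_lt hq0 Nat.one_pos⟩ : Fin q) t)) : ℕ) : ℝ)))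
      = ∑ i ∈ univ.filter (fun i : Fin q => (i : ℕ) < q - 1), ∑ a ∈ Finset.Nat.antidiagonalTuple q (L - 2), (L : ℝ) * ((L : ℝ) - 1) * ((Nat.multinomial univ a : ℝ) * ((w / ((q : ℝ) - 1)) ^ (L - 2) * (((q : ℝ) - 1) * (1 - w) / w) ^ (a (⟨q - 1, Nat.sub_lt hq0 Nat.one_pos⟩ : Fin q))) * ((univ.sup (fun t => a t + (stdb i t + stdb (⟨q - 1, Nat.sub_lt hq0 Nat.one_pos⟩ : Fin q) t)) : ℕ) : ℝ)) := Finset.sum_comm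
  have e5a : (∑ i ∈ univ.filter (fun i : Fin q => (i : ℕ) < q - 1), ∑ j ∈ univ.filter (fun i : Fin q => (i : ℕ) < q - 1), ∑ a ∈ Finset.Nat.antidiagonalTuple q (L - 2), (L : ℝ) * ((L : ℝ) - 1) * ((Nat.multinomial univ a : ℝ) * ((w / ((q : ℝ) - 1)) ^ (L - 2) * (((q : ℝ) - 1) * (1 - w) / w) ^ (a (⟨q - 1, Nat.sub_lt hq0 Nat.one_pos⟩ : Fin q))) * ((univ.sup (fun t => a t + (stdb i t + stdb j t)) : ℕ) : ℝ)))
      = ∑ i ∈ univ.filter (fun i : Fin q => (i : ℕ) < q - 1), ∑ j ∈ univ.filter (fun i : Fin q => (i : ℕ) < q - 1), ∑ b ∈ Finset.Nat.antidiagonalTuple q L, (Nat.multinomial univ b : ℝ) * ((∏ t, (b t).descFactorial (stdb i t + stdb j t) : ℕ) : ℝ) * (((univ.sup b : ℕ) : ℝ) * T0 ((q : ℝ) - 1) w ((∑ t ∈ univ.filter (fun i : Fin q => (i : ℕ) < q - 1), b t) - 2) (b (⟨q - 1, Nat.sub_lt hq0 Nat.one_pos⟩ : Fin q))) :=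
    Finset.sum_congr rfl fun i hi => Finset.sum_congr rfl fun j hj =>
      wrapper1 q L hq0 hL hr hw i j (Finset.mem_filter.mp hi).2 (Finset.mem_filter.mp hj).2
  have e5b : (∑ i ∈ univ.filter (fun i : Fin q => (i : ℕ) < q - 1), ∑ a ∈ Finset.Nat.antidiagonalTuple q (L - 2), (L : ℝ) * ((L : ℝ) - 1) * ((Nat.multinomial univ a : ℝ) * ((w / ((q : ℝ) - 1)) ^ (L - 2) * (((q : ℝ) - 1) * (1 - w) / w) ^ (a (⟨q - 1, Nat.sub_lt hq0 Nat.one_pos⟩ : Fin q))) * ((univ.sup (fun t => a t + (stdb i t + stdb (⟨q - 1, Nat.sub_lt hq0 Nat.one_pos⟩ : Fin q) t)) : ℕ) : ℝ)))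
      = ∑ i ∈ univ.filter (fun i : Fin q => (i : ℕ) < q - 1), ∑ b ∈ Finset.Nat.antidiagonalTuple q L, (Nat.multinomial univ b : ℝ) * ((∏ t, (b t).descFactorial (stdb i t + stdb (⟨q - 1, Nat.sub_lt hq0 Nat.one_pos⟩ : Fin q) t) : ℕ) : ℝ) * (((univ.sup b : ℕ) : ℝ) * T0 ((q : ℝ) - 1) w ((∑ t ∈ univ.filter (fun i : Fin q => (i : ℕ) < q - 1), b t) - 1) (b (⟨q - 1, Nat.sub_lt hq0 Nat.one_pos⟩ : Fin q) - 1)) :=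
    Finset.sum_congr rfl fun i hi => wrapper2 q L hq0 hL hr hw i (Finset.mem_filter.mp hi).2
  have e5c : (∑ a ∈ Finset.Nat.antidiagonalTuple q (L - 2), (L : ℝ) * ((L : ℝ) - 1) * ((Nat.multinomial univ a : ℝ) * ((w / ((q : ℝ) - 1)) ^ (L - 2) * (((q : ℝ) - 1) * (1 - w) / w) ^ (a (⟨q - 1, Nat.sub_lt hq0 Nat.one_pos⟩ : Fin q))) * ((univ.sup (fun t => a t + 2 * stdb (⟨q - 1, Nat.sub_lt hq0 Nat.one_pos⟩ : Fin q) t) : ℕ) : ℝ))) = ∑ b ∈ Finset.Nat.antidiagonalTuple q L, (Nat.multinomial univ b : ℝ) * ((∏ t, (b t).descFactorial (2 * stdb (⟨q - 1, Nat.sub_lt hq0 Nat.one_pos⟩ : Fin q) t) : ℕ) : ℝ) * (((univ.sup b : ℕ) : ℝ) * T0 ((q : ℝ) - 1) w (∑ t ∈ univ.filter (fun i : Fin q => (i : ℕ) < q - 1), b t) (b (⟨q - 1, Nat.sub_lt hq0 Nat.one_pos⟩ : Fin q) - 2)) := wrapper3 q L hq0 hL hr hw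
  have sw3 : (∑ i ∈ univ.filter (fun i : Fin q => (i : ℕ) < q - 1), ∑ j ∈ univ.filter (fun i : Fin q => (i : ℕ) < q - 1), ∑ b ∈ Finset.Nat.antidiagonalTuple q L, (Nat.multinomial univ b : ℝ) * ((∏ t, (b t).descFactorial (stdb i t + stdb j t) : ℕ) : ℝ) * (((univ.sup b : ℕ) : ℝ) * T0 ((q : ℝ) - 1) w ((∑ t ∈ univ.filter (fun i : Fin q => (i : ℕ) < q - 1), b t) - 2) (b (⟨q - 1, Nat.sub_lt hq0 Nat.one_pos⟩ : Fin q))))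
      = ∑ b ∈ Finset.Nat.antidiagonalTuple q L, ∑ i ∈ univ.filter (fun i : Fin q => (i : ℕ) < q - 1), ∑ j ∈ univ.filter (fun i : Fin q => (i : ℕ) < q - 1), (Nat.multinomial univ b : ℝ) * ((∏ t, (b t).descFactorial (stdb i t + stdb j t) : ℕ) : ℝ) * (((univ.sup b : ℕ) : ℝ) * T0 ((q : ℝ) - 1) w ((∑ t ∈ univ.filter (fun i : Fin q => (i : ℕ) < q - 1), b t) - 2) (b (⟨q - 1, Nat.sub_lt hq0 Nat.one_pos⟩ : Fin q))) := sum_comm3 _ _ _ _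
  have sw4 : (∑ i ∈ univ.filter (fun i : Fin q => (i : ℕ) < q - 1), ∑ b ∈ Finset.Nat.antidiagonalTuple q L, (Nat.multinomial univ b : ℝ) * ((∏ t, (b t).descFactorial (stdb i t + stdb (⟨q - 1, Nat.sub_lt hq0 Nat.one_pos⟩ : Fin q) t) : ℕ) : ℝ) * (((univ.sup b : ℕ) : ℝ) * T0 ((q : ℝ) - 1) w ((∑ t ∈ univ.filter (fun i : Fin q => (i : ℕ) < q - 1), b t) - 1) (b (⟨q - 1, Nat.sub_lt hq0 Nat.one_pos⟩ : Fin q) - 1)))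
      = ∑ b ∈ Finset.Nat.antidiagonalTuple q L, ∑ i ∈ univ.filter (fun i : Fin q => (i : ℕ) < q - 1), (Nat.multinomial univ b : ℝ) * ((∏ t, (b t).descFactorial (stdb i t + stdb (⟨q - 1, Nat.sub_lt hq0 Nat.one_pos⟩ : Fin q) t) : ℕ) : ℝ) * (((univ.sup b : ℕ) : ℝ) * T0 ((q : ℝ) - 1) w ((∑ t ∈ univ.filter (fun i : Fin q => (i : ℕ) < q - 1), b t) - 1) (b (⟨q - 1, Nat.sub_lt hq0 Nat.one_pos⟩ : Fin q) - 1)) := Finset.sum_comm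
  calc (L : ℝ) * ((L : ℝ) - 1) * (w / ((q : ℝ) - 1)) ^ (L - 2) *
        ∑ a ∈ Finset.Nat.antidiagonalTuple q (L - 2), (Nat.multinomial univ a : ℝ) * (((q : ℝ) - 1) * (1 - w) / w) ^ (a (⟨q - 1, Nat.sub_lt hq0 Nat.one_pos⟩ : Fin q)) * Gfun q hq0 a
      = ∑ a ∈ Finset.Nat.antidiagonalTuple q (L - 2), (L : ℝ) * ((L : ℝ) - 1) * (w / ((q : ℝ) - 1)) ^ (L - 2) * ((Nat.multinomial univ a : ℝ) * (((q : ℝ) - 1) * (1 - w) / w) ^ (a (⟨q - 1, Nat.sub_lt hq0 Nat.one_pos⟩ : Fin q)) * Gfun q hq0 a) := by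
        rw [Finset.mul_sum]
    _ = ∑ a ∈ Finset.Nat.antidiagonalTuple q (L - 2), ((1 / ((q : ℝ) - 1) ^ 2) * (∑ i ∈ univ.filter (fun i : Fin q => (i : ℕ) < q - 1), ∑ j ∈ univ.filter (fun i : Fin q => (i : ℕ) < q - 1), (L : ℝ) * ((L : ℝ) - 1) * ((Nat.multinomial univ a : ℝ) * ((w / ((q : ℝ) - 1)) ^ (L - 2) * (((q : ℝ) - 1) * (1 - w) / w) ^ (a (⟨q - 1, Nat.sub_lt hq0 Nat.one_pos⟩ : Fin q))) * ((univ.sup (fun t => a t + (stdb i t + stdb j t)) : ℕ) : ℝ)))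
          - (2 / ((q : ℝ) - 1)) * (∑ i ∈ univ.filter (fun i : Fin q => (i : ℕ) < q - 1), (L : ℝ) * ((L : ℝ) - 1) * ((Nat.multinomial univ a : ℝ) * ((w / ((q : ℝ) - 1)) ^ (L - 2) * (((q : ℝ) - 1) * (1 - w) / w) ^ (a (⟨q - 1, Nat.sub_lt hq0 Nat.one_pos⟩ : Fin q))) * ((univ.sup (fun t => a t + (stdb i t + stdb (⟨q - 1, Nat.sub_lt hq0 Nat.one_pos⟩ : Fin q) t)) : ℕ) : ℝ))) + (L : ℝ) * ((L : ℝ) - 1) * ((Nat.multinomial univ a : ℝ) * ((w / ((q : ℝ) - 1)) ^ (L - 2) * (((q : ℝ) - 1) * (1 - w) / w) ^ (a (⟨q - 1, Nat.sub_lt hq0 Nat.one_pos⟩ : Fin q))) * ((univ.sup (fun t => a t + 2 * stdb (⟨q - 1, Nat.sub_lt hq0 Nat.one_pos⟩ : Fin q) t) : ℕ) : ℝ))) :=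
        Finset.sum_congr rfl fun a _ => per_a_distribute q L hq0 w a
    _ = (1 / ((q : ℝ) - 1) ^ 2) * (∑ a ∈ Finset.Nat.antidiagonalTuple q (L - 2), ∑ i ∈ univ.filter (fun i : Fin q => (i : ℕ) < q - 1), ∑ j ∈ univ.filter (fun i : Fin q => (i : ℕ) < q - 1), (L : ℝ) * ((L : ℝ) - 1) * ((Nat.multinomial univ a : ℝ) * ((w / ((q : ℝ) - 1)) ^ (L - 2) * (((q : ℝ) - 1) * (1 - w) / w) ^ (a (⟨q - 1, Nat.sub_lt hq0 Nat.one_pos⟩ : Fin q))) * ((univ.sup (fun t => a t + (stdb i t + stdb j t)) : ℕ) : ℝ)))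
          - (2 / ((q : ℝ) - 1)) * (∑ a ∈ Finset.Nat.antidiagonalTuple q (L - 2), ∑ i ∈ univ.filter (fun i : Fin q => (i : ℕ) < q - 1), (L : ℝ) * ((L : ℝ) - 1) * ((Nat.multinomial univ a : ℝ) * ((w / ((q : ℝ) - 1)) ^ (L - 2) * (((q : ℝ) - 1) * (1 - w) / w) ^ (a (⟨q - 1, Nat.sub_lt hq0 Nat.one_pos⟩ : Fin q))) * ((univ.sup (fun t => a t + (stdb i t + stdb (⟨q - 1, Nat.sub_lt hq0 Nat.one_pos⟩ : Fin q) t)) : ℕ) : ℝ)))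
          + ∑ a ∈ Finset.Nat.antidiagonalTuple q (L - 2), (L : ℝ) * ((L : ℝ) - 1) * ((Nat.multinomial univ a : ℝ) * ((w / ((q : ℝ) - 1)) ^ (L - 2) * (((q : ℝ) - 1) * (1 - w) / w) ^ (a (⟨q - 1, Nat.sub_lt hq0 Nat.one_pos⟩ : Fin q))) * ((univ.sup (fun t => a t + 2 * stdb (⟨q - 1, Nat.sub_lt hq0 Nat.one_pos⟩ : Fin q) t) : ℕ) : ℝ)) := by
        rw [Finset.sum_add_distrib, Finset.sum_sub_distrib, ← Finset.mul_sum, ← Finset.mul_sum]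
    _ = (1 / ((q : ℝ) - 1) ^ 2) * (∑ i ∈ univ.filter (fun i : Fin q => (i : ℕ) < q - 1), ∑ j ∈ univ.filter (fun i : Fin q => (i : ℕ) < q - 1), ∑ b ∈ Finset.Nat.antidiagonalTuple q L, (Nat.multinomial univ b : ℝ) * ((∏ t, (b t).descFactorial (stdb i t + stdb j t) : ℕ) : ℝ) * (((univ.sup b : ℕ) : ℝ) * T0 ((q : ℝ) - 1) w ((∑ t ∈ univ.filter (fun i : Fin q => (i : ℕ) < q - 1), b t) - 2) (b (⟨q - 1, Nat.sub_lt hq0 Nat.one_pos⟩ : Fin q))))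
          - (2 / ((q : ℝ) - 1)) * (∑ i ∈ univ.filter (fun i : Fin q => (i : ℕ) < q - 1), ∑ b ∈ Finset.Nat.antidiagonalTuple q L, (Nat.multinomial univ b : ℝ) * ((∏ t, (b t).descFactorial (stdb i t + stdb (⟨q - 1, Nat.sub_lt hq0 Nat.one_pos⟩ : Fin q) t) : ℕ) : ℝ) * (((univ.sup b : ℕ) : ℝ) * T0 ((q : ℝ) - 1) w ((∑ t ∈ univ.filter (fun i : Fin q => (i : ℕ) < q - 1), b t) - 1) (b (⟨q - 1, Nat.sub_lt hq0 Nat.one_pos⟩ : Fin q) - 1)))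
          + ∑ b ∈ Finset.Nat.antidiagonalTuple q L, (Nat.multinomial univ b : ℝ) * ((∏ t, (b t).descFactorial (2 * stdb (⟨q - 1, Nat.sub_lt hq0 Nat.one_pos⟩ : Fin q) t) : ℕ) : ℝ) * (((univ.sup b : ℕ) : ℝ) * T0 ((q : ℝ) - 1) w (∑ t ∈ univ.filter (fun i : Fin q => (i : ℕ) < q - 1), b t) (b (⟨q - 1, Nat.sub_lt hq0 Nat.one_pos⟩ : Fin q) - 2)) := by
        rw [sw1, sw2, e5a, e5b, e5c]
    _ = (1 / ((q : ℝ) - 1) ^ 2) * (∑ b ∈ Finset.Nat.antidiagonalTuple q L, ∑ i ∈ univ.filter (fun i : Fin q => (i : ℕ) < q - 1), ∑ j ∈ univ.filter (fun i : Fin q => (i : ℕ) < q - 1), (Nat.multinomial univ b : ℝ) * ((∏ t, (b t).descFactorial (stdb i t + stdb j t) : ℕ) : ℝ) * (((univ.sup b : ℕ) : ℝ) * T0 ((q : ℝ) - 1) w ((∑ t ∈ univ.filter (fun i : Fin q => (i : ℕ) < q - 1), b t) - 2) (b (⟨q - 1, Nat.sub_lt hq0 Nat.one_pos⟩ : Fin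 q))))
          - (2 / ((q : ℝ) - 1)) * (∑ b ∈ Finset.Nat.antidiagonalTuple q L, ∑ i ∈ univ.filter (fun i : Fin q => (i : ℕ) < q - 1), (Nat.multinomial univ b : ℝ) * ((∏ t, (b t).descFactorial (stdb i t + stdb (⟨q - 1, Nat.sub_lt hq0 Nat.one_pos⟩ : Fin q) t) : ℕ) : ℝ) * (((univ.sup b : ℕ) : ℝ) * T0 ((q : ℝ) - 1) w ((∑ t ∈ univ.filter (fun i : Fin q => (i : ℕ) < q - 1), b t) - 1) (b (⟨q - 1, Nat.sub_lt hq0 Nat.one_pos⟩ : Fin q) - 1)))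
          + ∑ b ∈ Finset.Nat.antidiagonalTuple q L, (Nat.multinomial univ b : ℝ) * ((∏ t, (b t).descFactorial (2 * stdb (⟨q - 1, Nat.sub_lt hq0 Nat.one_pos⟩ : Fin q) t) : ℕ) : ℝ) * (((univ.sup b : ℕ) : ℝ) * T0 ((q : ℝ) - 1) w (∑ t ∈ univ.filter (fun i : Fin q => (i : ℕ) < q - 1), b t) (b (⟨q - 1, Nat.sub_lt hq0 Nat.one_pos⟩ : Fin q) - 2)) := by
        rw [sw3, sw4]
    _ = ∑ b ∈ Finset.Nat.antidiagonalTuple q L, ((1 / ((q : ℝ) - 1) ^ 2) * (∑ i ∈ univ.filter (fun i : Fin q => (i : ℕ) < q - 1), ∑ j ∈ univ.filter (fun i : Fin q => (i : ℕ) < q - 1), (Nat.multinomial univ b : ℝ) * ((∏ t, (b t).descFactorial (stdb i t + stdb j t) : ℕ) : ℝ) * (((univ.sup b : ℕ) : ℝ) * T0 ((q : ℝ) - 1) w ((∑ t ∈ univ.filter (fun i : Fin q => (i : ℕ) < q - 1), b t) - 2) (b (⟨q - 1, Nat.sub_lt hq0 Nat.one_pos⟩ : Fin q))))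
          - (2 / ((q : ℝ) - 1)) * (∑ i ∈ univ.filter (fun i : Fin q => (i : ℕ) < q - 1), (Nat.multinomial univ b : ℝ) * ((∏ t, (b t).descFactorial (stdb i t + stdb (⟨q - 1, Nat.sub_lt hq0 Nat.one_pos⟩ : Fin q) t) : ℕ) : ℝ) * (((univ.sup b : ℕ) : ℝ) * T0 ((q : ℝ) - 1) w ((∑ t ∈ univ.filter (fun i : Fin q => (i : ℕ) < q - 1), b t) - 1) (b (⟨q - 1, Nat.sub_lt hq0 Nat.one_pos⟩ : Fin q) - 1))) + (Nat.multinomial univ b : ℝ) * ((∏ t, (b t).descFactorial (2 * stdb (⟨q - 1, Nat.sub_lt hq0 Nat.one_pos⟩ : Fin q) t) : ℕ) : ℝ) * (((univ.sup b : ℕ) : ℝ) * T0 ((q : ℝ) - 1) w (∑ t ∈ univ.filter (fun i : Fin q => (i : ℕ) < q - 1), b t) (b (⟨q - 1, Nat.sub_lt hq0 Nat.one_pos⟩ : Fin q) - 2))) := by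
        rw [Finset.mul_sum, Finset.mul_sum, ← Finset.sum_sub_distrib, ← Finset.sum_add_distrib]
    _ = ∑ b ∈ Finset.Nat.antidiagonalTuple q L, (Nat.multinomial univ b : ℝ) * ((univ.sup b : ℕ) : ℝ) * T2 ((q : ℝ) - 1) w (∑ t ∈ univ.filter (fun i : Fin q => (i : ℕ) < q - 1), b t) (b (⟨q - 1, Nat.sub_lt hq0 Nat.one_pos⟩ : Fin q)) :=
        Finset.sum_congr rfl fun b _ => per_b_final q L hq0 w b

lemma per_b_T0 (q L : ℕ) (hq0 : 0 < q) (x : ℝ) (b : Fin q → ℕ) :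
    (Nat.multinomial univ b : ℝ) * ((univ.sup b : ℕ) : ℝ) * ∏ i, PqW q x i ^ b i
      = (Nat.multinomial univ b : ℝ) * ((univ.sup b : ℕ) : ℝ) *
          T0 ((q : ℝ) - 1) x (∑ t ∈ univ.filter (fun i : Fin q => (i : ℕ) < q - 1), b t) (b (⟨q - 1, Nat.sub_lt hq0 Nat.one_pos⟩ : Fin q)) := by
  rw [prod_PqW hq0 x b]
  simp only [T0]

theorem stmt7 (q L : ℕ) (hq : 2 ≤ q) (hL : 2 ≤ L) (w : ℝ) (hw0 : 0 < w)
    (hw1 : w ≤ 1) :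
    deriv (deriv (fun w => fqLpoly q L (PqW q w))) w =
      (L : ℝ) * ((L : ℝ) - 1) * (w / ((q : ℝ) - 1)) ^ (L - 2) *
        ∑ a ∈ Finset.Nat.antidiagonalTuple q (L - 2),
          (Nat.multinomial Finset.univ a : ℝ) *
            (((q : ℝ) - 1) * (1 - w) / w) ^ (a ⟨q - 1, by omega⟩) *
            Gfun q (by omega) a := by
  classical
  have hq0 : 0 < q := by omega
  have hr : ((q : ℝ) - 1) ≠ 0 := by
    have h2 : (2 : ℝ) ≤ (q : ℝ) := by exact_mod_cast hq
    linarith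
  have hw : w ≠ 0 := ne_of_gt hw0
  have hg : (fun w => fqLpoly q L (PqW q w))
      = fun x => ∑ b ∈ Finset.Nat.antidiagonalTuple q L, (Nat.multinomial univ b : ℝ) * ((univ.sup b : ℕ) : ℝ) *
          T0 ((q : ℝ) - 1) x (∑ t ∈ univ.filter (fun i : Fin q => (i : ℕ) < q - 1), b t) (b (⟨q - 1, Nat.sub_lt hq0 Nat.one_pos⟩ : Fin q)) := by
    funext x
    unfold fqLpoly
    exact Finset.sum_congr rfl fun b _ => per_b_T0 q L hq0 x b
  have hd1 : deriv (fun x => ∑ b ∈ Finset.Nat.antidiagonalTuple q L, (Nat.multinomial univ b : ℝ) * ((univ.sup b : ℕ) : ℝ) *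
          T0 ((q : ℝ) - 1) x (∑ t ∈ univ.filter (fun i : Fin q => (i : ℕ) < q - 1), b t) (b (⟨q - 1, Nat.sub_lt hq0 Nat.one_pos⟩ : Fin q)))
      = fun x => ∑ b ∈ Finset.Nat.antidiagonalTuple q L, (Nat.multinomial univ b : ℝ) * ((univ.sup b : ℕ) : ℝ) *
          T1 ((q : ℝ) - 1) x (∑ t ∈ univ.filter (fun i : Fin q => (i : ℕ) < q - 1), b t) (b (⟨q - 1, Nat.sub_lt hq0 Nat.one_pos⟩ : Fin q)) := by
    funext x
    exact HasDerivAt.deriv (HasDerivAt.fun_sum fun b _ =>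
      (hasDerivAt_T0 ((q : ℝ) - 1) _ _ x).const_mul ((Nat.multinomial univ b : ℝ) * ((univ.sup b : ℕ) : ℝ)))
  have hd2 : deriv (fun x => ∑ b ∈ Finset.Nat.antidiagonalTuple q L, (Nat.multinomial univ b : ℝ) * ((univ.sup b : ℕ) : ℝ) *
          T1 ((q : ℝ) - 1) x (∑ t ∈ univ.filter (fun i : Fin q => (i : ℕ) < q - 1), b t) (b (⟨q - 1, Nat.sub_lt hq0 Nat.one_pos⟩ : Fin q))) w
      = ∑ b ∈ Finset.Nat.antidiagonalTuple q L, (Nat.multinomial univ b : ℝ) * ((univ.sup b : ℕ) : ℝ) *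
          T2 ((q : ℝ) - 1) w (∑ t ∈ univ.filter (fun i : Fin q => (i : ℕ) < q - 1), b t) (b (⟨q - 1, Nat.sub_lt hq0 Nat.one_pos⟩ : Fin q)) :=
    HasDerivAt.deriv (HasDerivAt.fun_sum fun b _ =>
      (hasDerivAt_T1 ((q : ℝ) - 1) _ _ w).const_mul ((Nat.multinomial univ b : ℝ) * ((univ.sup b : ℕ) : ℝ)))
  rw [hg, hd1, hd2]
  exact (main_rhs_eq q L hq0 hL hr hw).symm
end

section
/- Let q ≥ 2 and a ∈ Z_{≥0}^q with a_1 ≥ a_2 ≥ ... ≥ a_{q−1}, and let r be the number of indices i ∈ [q] with a_i = max{a}. Define G(a) = (1/(q−1)^2) Σ_{i,j∈[q−1]} max{a+e_i+e_j} − (2/(q−1)) Σ_{i∈[q−1]} max{a+e_i+e_q} + max{a+2e_q}. If a_q < max{a} then G(a) ≥ −r(r−1)/(q−1)^2, and if a_q = max{a} then G(a) ≥ (2(r−1)(q−1) − (r−1)(r−2))/(q−1)^2. -/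
open Finset

theorem stmt8 (q : ℕ) (hq : 2 ≤ q) (a : Fin q → ℕ)
    (hsorted : ∀ i j : Fin q, i ≤ j → (j : ℕ) < q - 1 → a j ≤ a i) :
    let r : ℝ := ((Finset.univ.filter fun i => a i = Finset.univ.sup a).card : ℝ)
    (a ⟨q - 1, by omega⟩ < Finset.univ.sup a →
      -(r * (r - 1)) / ((q : ℝ) - 1) ^ 2 ≤ Gfun q (by omega) a) ∧
    (a ⟨q - 1, by omega⟩ = Finset.univ.sup a →
      (2 * (r - 1) * ((q : ℝ) - 1) - (r - 1) * (r - 2)) / ((q : ℝ) - 1) ^ 2 ≤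
        Gfun q (by omega) a) := by
  intro r
  have hLq : q - 1 < q := by omega
  set M := Finset.univ.sup a with hM
  set L : Fin q := ⟨q - 1, hLq⟩ with hLdef
  set lo : Finset (Fin q) := Finset.univ.filter (fun i => (i : ℕ) < q - 1) with hlodef
  set c : Fin q → ℝ := fun i => if a i = M then 1 else 0 with hcdef
  set S : ℝ := ((lo.filter fun i => a i = M).card : ℝ) with hSdef
  set n : ℝ := (q : ℝ) - 1 with hndef
  set F := ∑ i ∈ lo, ∑ j ∈ lo,
      ((Finset.univ.sup fun t => a t + stdb i t + stdb j t : ℕ) : ℝ) with hFdef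
  set Mid := ∑ i ∈ lo,
      ((Finset.univ.sup fun t => a t + stdb i t + stdb L t : ℕ) : ℝ) with hMiddef
  set Last := ((Finset.univ.sup fun t => a t + 2 * stdb L t : ℕ) : ℝ) with hLastdef
  have hq2 : (2 : ℝ) ≤ (q : ℝ) := by exact_mod_cast hq
  have hn1 : (1 : ℝ) ≤ n := by rw [hndef]; linarith
  have hn0 : (0 : ℝ) < n := by linarith
  have hLlo : L ∉ lo := by simp [hlodef, hLdef]
  have huniv : (Finset.univ : Finset (Fin q)) = insert L lo := by
    ext i
    simp only [Finset.mem_insert, hlodef, Finset.mem_filter, Finset.mem_univ, true_and,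
      true_iff]
    rcases Nat.lt_or_ge (i : ℕ) (q - 1) with h | h
    · exact Or.inr h
    · left
      have hi := i.isLt
      apply Fin.ext
      simp only [hLdef]
      omega
  have hcardlo : (lo.card : ℝ) = n := by
    have h1 : (Finset.univ : Finset (Fin q)).card = q := by simp
    rw [huniv, Finset.card_insert_of_notMem hLlo] at h1
    have h2 : lo.card = q - 1 := by omega
    rw [h2, hndef, Nat.cast_sub (by omega : 1 ≤ q), Nat.cast_one]
  have haM : ∀ t, a t ≤ M := fun t => Finset.le_sup (Finset.mem_univ t)
  have hS : ∑ i ∈ lo, c i = S := by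
    simp only [hSdef, hcdef]
    exact Finset.sum_boole (fun i => a i = M) lo
  have hilo_ne : ∀ i ∈ lo, i ≠ L := by
    intro i hi
    simp only [hlodef, Finset.mem_filter, Finset.mem_univ, true_and] at hi
    intro h
    rw [h] at hi
    simp only [hLdef] at hi
    omega
  -- per-term lower bound for the double-sum terms
  have key1 : ∀ i j : Fin q,
      (M : ℝ) + c i + c j - c i * c j + (if i = j then c i else 0)
        ≤ ((Finset.univ.sup fun t => a t + stdb i t + stdb j t : ℕ) : ℝ) := by
    intro i j
    set v := Finset.univ.sup fun t => a t + stdb i t + stdb j t with hv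
    have base : (M : ℝ) ≤ (v : ℝ) := by
      exact_mod_cast (Finset.sup_mono_fun (fun t _ => by omega) :
        M ≤ Finset.univ.sup fun t => a t + stdb i t + stdb j t)
    have hi : a i + 1 + (if i = j then 1 else 0) ≤ v := by
      have h : a i + stdb i i + stdb j i ≤ v :=
        Finset.le_sup (f := fun t => a t + stdb i t + stdb j t) (Finset.mem_univ i)
      simpa [stdb] using h
    have hj : a j + (if j = i then 1 else 0) + 1 ≤ v := by
      have h : a j + stdb i j + stdb j j ≤ v :=
        Finset.le_sup (f := fun t => a t + stdb i t + stdb j t) (Finset.mem_univ j)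
      simpa [stdb] using h
    by_cases hij : i = j
    · subst hij
      rw [if_pos rfl] at hi
      rw [if_pos rfl]
      by_cases hai : a i = M
      · have h2 : (M : ℝ) + 2 ≤ (v : ℝ) := by exact_mod_cast (by omega : M + 2 ≤ v)
        simp only [hcdef, if_pos hai]
        linarith
      · simp only [hcdef, if_neg hai]
        linarith
    · rw [if_neg hij] at hi
      rw [if_neg (Ne.symm hij)] at hj
      rw [if_neg hij]
      have h2 : (a i : ℝ) + 1 ≤ (v : ℝ) := by exact_mod_cast (by omega : a i + 1 ≤ v)
      have h3 : (a j : ℝ) + 1 ≤ (v : ℝ) := by exact_mod_cast (by omega : a j + 1 ≤ v)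
      rcases eq_or_ne (a i) M with hai | hai <;> rcases eq_or_ne (a j) M with haj | haj
      · have e1 : (a i : ℝ) = M := by exact_mod_cast hai
        simp only [hcdef, if_pos hai, if_pos haj]
        linarith
      · have e1 : (a i : ℝ) = M := by exact_mod_cast hai
        simp only [hcdef, if_pos hai, if_neg haj]
        linarith
      · have e1 : (a j : ℝ) = M := by exact_mod_cast haj
        simp only [hcdef, if_neg hai, if_pos haj]
        linarith
      · simp only [hcdef, if_neg hai, if_neg haj]
        linarith
  -- value of the summed lower bound
  have hb : ∑ i ∈ lo, ∑ j ∈ lo,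
      ((M : ℝ) + c i + c j - c i * c j + (if i = j then c i else 0))
      = n * n * (M : ℝ) + 2 * S * n - S * S + S := by
    have h1 : ∀ i ∈ lo, ∑ j ∈ lo,
        ((M : ℝ) + c i + c j - c i * c j + (if i = j then c i else 0))
        = n * ((M : ℝ) + c i) + S - c i * S + c i := by
      intro i hi
      rw [Finset.sum_add_distrib, Finset.sum_sub_distrib, Finset.sum_add_distrib,
        Finset.sum_const, ← Finset.mul_sum, hS,
        Finset.sum_ite_eq lo i (fun _ => c i), if_pos hi, nsmul_eq_mul, hcardlo]
    rw [Finset.sum_congr rfl h1, Finset.sum_add_distrib, Finset.sum_sub_distrib,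
      Finset.sum_add_distrib, Finset.sum_const, ← Finset.sum_mul, hS, ← Finset.mul_sum,
      Finset.sum_add_distrib, Finset.sum_const, hS, nsmul_eq_mul, nsmul_eq_mul, hcardlo]
    ring
  have hF : n * n * (M : ℝ) + 2 * S * n - S * S + S ≤ F := by
    rw [hFdef, ← hb]
    exact Finset.sum_le_sum fun i _ => Finset.sum_le_sum fun j _ => key1 i j
  refine ⟨?_, ?_⟩
  · -- case a L < M
    intro hlast
    have hlt : a L < M := hlast
    have hr0 : r = S := by
      have h0 : r = ((Finset.univ.filter fun i => a i = M).card : ℝ) := rfl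
      rw [h0, huniv, Finset.filter_insert, if_neg (by omega : ¬ a L = M), hSdef]
    have key2a : ∀ i ∈ lo,
        ((Finset.univ.sup fun t => a t + stdb i t + stdb L t : ℕ) : ℝ) ≤ (M : ℝ) + c i := by
      intro i hi
      have hiL := hilo_ne i hi
      have h : (Finset.univ.sup fun t => a t + stdb i t + stdb L t)
          ≤ M + (if a i = M then 1 else 0) := by
        apply Finset.sup_le
        intro t _
        have ht := haM t
        have hti := haM i
        have e1 : stdb i t = if t = i then 1 else 0 := rfl
        have e2 : stdb L t = if t = L then 1 else 0 := rfl
        rw [e1, e2]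
        by_cases h1 : t = i
        · subst h1
          rw [if_pos rfl, if_neg hiL]
          split_ifs <;> omega
        · rw [if_neg h1]
          by_cases h2 : t = L
          · subst h2
            rw [if_pos rfl]
            split_ifs <;> omega
          · rw [if_neg h2]
            split_ifs <;> omega
      have h' : ((Finset.univ.sup fun t => a t + stdb i t + stdb L t : ℕ) : ℝ)
          ≤ ((M + (if a i = M then 1 else 0) : ℕ) : ℝ) := Nat.cast_le.mpr h
      refine h'.trans_eq ?_
      simp only [hcdef]
      push_cast
      ring
    have hMid : Mid ≤ n * (M : ℝ) + S := by
      rw [hMiddef]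
      calc ∑ i ∈ lo, ((Finset.univ.sup fun t => a t + stdb i t + stdb L t : ℕ) : ℝ)
          ≤ ∑ i ∈ lo, ((M : ℝ) + c i) := Finset.sum_le_sum key2a
        _ = lo.card * (M : ℝ) + S := by
            rw [Finset.sum_add_distrib, Finset.sum_const, hS, nsmul_eq_mul]
        _ = n * (M : ℝ) + S := by rw [hcardlo]
    have hLast : (M : ℝ) ≤ Last := by
      rw [hLastdef]
      exact_mod_cast (Finset.sup_mono_fun (fun t _ => by omega) :
        M ≤ Finset.univ.sup fun t => a t + 2 * stdb L t)
    have h1 : (1 / n ^ 2) * (n * n * (M : ℝ) + 2 * S * n - S * S + S) ≤ (1 / n ^ 2) * F :=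
      mul_le_mul_of_nonneg_left hF (by positivity)
    have h2 : (2 / n) * Mid ≤ (2 / n) * (n * (M : ℝ) + S) :=
      mul_le_mul_of_nonneg_left hMid (by positivity)
    have key : (1 / n ^ 2) * (n * n * (M : ℝ) + 2 * S * n - S * S + S)
        - (2 / n) * (n * (M : ℝ) + S) + (M : ℝ) = -(S * (S - 1)) / n ^ 2 := by
      field_simp
      ring
    have hmain : -(r * (r - 1)) / n ^ 2 ≤ (1 / n ^ 2) * F - (2 / n) * Mid + Last := by
      rw [hr0]
      linarith
    exact hmain
  · -- case a L = M
    intro hlast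
    have heq : a L = M := hlast
    have hr0 : r = S + 1 := by
      have h0 : r = ((Finset.univ.filter fun i => a i = M).card : ℝ) := rfl
      have hnotmem : L ∉ lo.filter fun i => a i = M :=
        fun h => hLlo (Finset.mem_of_mem_filter _ h)
      rw [h0, huniv, Finset.filter_insert, if_pos heq,
        Finset.card_insert_of_notMem hnotmem, hSdef]
      push_cast
      ring
    have key2b : ∀ i ∈ lo,
        ((Finset.univ.sup fun t => a t + stdb i t + stdb L t : ℕ) : ℝ) ≤ (M : ℝ) + 1 := by
      intro i hi
      have hiL := hilo_ne i hi
      have h : (Finset.univ.sup fun t => a t + stdb i t + stdb L t) ≤ M + 1 := by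
        apply Finset.sup_le
        intro t _
        have ht := haM t
        have hti := haM i
        have htL := haM L
        have e1 : stdb i t = if t = i then 1 else 0 := rfl
        have e2 : stdb L t = if t = L then 1 else 0 := rfl
        rw [e1, e2]
        by_cases h1 : t = i
        · subst h1
          rw [if_pos rfl, if_neg hiL]
          omega
        · rw [if_neg h1]
          by_cases h2 : t = L
          · subst h2
            rw [if_pos rfl]
            omega
          · rw [if_neg h2]
            omega
      exact_mod_cast h
    have hMid : Mid ≤ n * ((M : ℝ) + 1) := by
      rw [hMiddef]
      calc ∑ i ∈ lo, ((Finset.univ.sup fun t => a t + stdb i t + stdb L t : ℕ) : ℝ)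
          ≤ ∑ i ∈ lo, ((M : ℝ) + 1) := Finset.sum_le_sum key2b
        _ = lo.card * ((M : ℝ) + 1) := by rw [Finset.sum_const, nsmul_eq_mul]
        _ = n * ((M : ℝ) + 1) := by rw [hcardlo]
    have hLast : (M : ℝ) + 2 ≤ Last := by
      have h := Finset.le_sup (f := fun t => a t + 2 * stdb L t) (Finset.mem_univ L)
      simp only [stdb, if_pos rfl, mul_one, heq] at h
      rw [hLastdef]
      exact_mod_cast h
    have h1 : (1 / n ^ 2) * (n * n * (M : ℝ) + 2 * S * n - S * S + S) ≤ (1 / n ^ 2) * F :=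
      mul_le_mul_of_nonneg_left hF (by positivity)
    have h2 : (2 / n) * Mid ≤ (2 / n) * (n * ((M : ℝ) + 1)) :=
      mul_le_mul_of_nonneg_left hMid (by positivity)
    have key : (1 / n ^ 2) * (n * n * (M : ℝ) + 2 * S * n - S * S + S)
        - (2 / n) * (n * ((M : ℝ) + 1)) + ((M : ℝ) + 2)
        = (2 * S * n - S * (S - 1)) / n ^ 2 := by
      field_simp
      ring
    have hT : (2 * (r - 1) * n - (r - 1) * (r - 2)) / n ^ 2
        = (2 * S * n - S * (S - 1)) / n ^ 2 := by
      rw [hr0]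
      ring_nf
    have hmain : (2 * (r - 1) * n - (r - 1) * (r - 2)) / n ^ 2
        ≤ (1 / n ^ 2) * F - (2 / n) * Mid + Last := by
      rw [hT]
      linarith
    exact hmain
end

section
/- For integers q ≥ 2, L ≥ 2 and 1 ≤ ℓ ≤ q−1, the function f_{q,L,ℓ}(P) = E_{(X_1,...,X_L)~P^{⊗L}}[plur_ℓ(X_1,...,X_L)], where plur_ℓ(x_1,...,x_L) = max over ℓ-subsets Σ of [q] of |{i : x_i ∈ Σ}|, is Schur convex on the probability simplex Δ([q]). -/
open Finset

/-- The `ℓ`-plurality of a tuple: the maximal number of its entries covered by an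
`ℓ`-subset of the alphabet. -/
def plurL {q L : ℕ} (ℓ : ℕ) (x : Fin L → Fin q) : ℕ :=
  (Finset.univ.powersetCard ℓ).sup fun S : Finset (Fin q) =>
    (Finset.univ.filter fun i => x i ∈ S).card

/-- `f_{q,L,ℓ}(P)`: the expected `ℓ`-plurality of `L` i.i.d. samples from `P`. -/
noncomputable def fqLl (q L ℓ : ℕ) (P : Fin q → ℝ) : ℝ :=
  ∑ x : Fin L → Fin q, (∏ i, P (x i)) * (plurL ℓ x : ℝ)

namespace Stmt12Aux

variable {q L : ℕ}

/-- count of value `v` in tuple `x` -/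
def cnt (x : Fin L → Fin q) (v : Fin q) : ℕ := (univ.filter fun k => x k = v).card

/-- plurality as a function of the count vector -/
def plurC (ℓ : ℕ) (ν : Fin q → ℕ) : ℕ :=
  (Finset.univ.powersetCard ℓ).sup fun S : Finset (Fin q) => ∑ v ∈ S, ν v

lemma card_filter_mem (x : Fin L → Fin q) (S : Finset (Fin q)) :
    (univ.filter fun i => x i ∈ S).card = ∑ v ∈ S, cnt x v := by
  rw [Finset.card_eq_sum_card_fiberwise (f := x) (s := univ.filter fun i => x i ∈ S) (t := S) (fun i hi => (mem_filter.1 hi).2)]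
  refine Finset.sum_congr rfl fun v hv => ?_
  congr 1
  ext i
  simp only [mem_filter, mem_univ, true_and, and_iff_right_iff_imp]
  rintro rfl; exact hv

lemma plurL_eq_plurC (ℓ : ℕ) (x : Fin L → Fin q) : plurL ℓ x = plurC ℓ (cnt x) := by
  unfold plurL plurC
  exact Finset.sup_congr rfl fun S _ => card_filter_mem x S

lemma cnt_comp_perm (x : Fin L → Fin q) (σ : Equiv.Perm (Fin q)) (u : Fin q) :
    cnt (fun k => σ (x k)) u = cnt x (σ.symm u) := by
  unfold cnt
  congr 1
  ext k
  simp [Equiv.eq_symm_apply, eq_comm]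

lemma plurC_comp_perm (ℓ : ℕ) (ν : Fin q → ℕ) (σ : Equiv.Perm (Fin q)) :
    plurC ℓ (fun v => ν (σ v)) = plurC ℓ ν := by
  unfold plurC
  have himg : (Finset.univ.powersetCard ℓ).image (fun S : Finset (Fin q) => S.image σ)
      = Finset.univ.powersetCard ℓ := by
    ext T
    simp only [Finset.mem_image, Finset.mem_powersetCard_univ]
    constructor
    · rintro ⟨S, hS, rfl⟩
      rw [Finset.card_image_of_injective _ σ.injective]; exact hS
    · intro hT
      refine ⟨T.image σ.symm, ?_, ?_⟩
      · rw [Finset.card_image_of_injective _ σ.symm.injective]; exact hT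
      · rw [Finset.image_image]
        simp
  conv_rhs => rw [← himg, Finset.sup_image]
  refine Finset.sup_congr rfl fun S _ => ?_
  simp only [Function.comp]
  rw [Finset.sum_image (fun a _ b _ h => σ.injective h)]

lemma plurL_comp_perm (ℓ : ℕ) (x : Fin L → Fin q) (σ : Equiv.Perm (Fin q)) :
    plurL ℓ (fun k => σ (x k)) = plurL ℓ x := by
  rw [plurL_eq_plurC, plurL_eq_plurC]
  have : cnt (fun k => σ (x k)) = fun u => cnt x (σ.symm u) := by
    ext u; exact cnt_comp_perm x σ u
  rw [this]
  have := plurC_comp_perm ℓ (cnt x) σ.symm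
  exact this


lemma plurC_le (ℓ : ℕ) (μ ν : Fin q → ℕ) (v w : Fin q) (hvw : v ≠ w) (a b : ℕ) (hab : b ≤ a)
    (hother : ∀ u, u ≠ v → u ≠ w → ν u = μ u)
    (hμv : μ v = a + 1) (hμw : μ w = b) (hνv : ν v = b + 1) (hνw : ν w = a) :
    plurC ℓ ν ≤ plurC ℓ μ := by
  apply Finset.sup_le
  intro S hS
  by_cases hv : v ∈ S <;> by_cases hw : w ∈ S
  · -- both in S : sums are equal
    refine le_trans (le_of_eq ?_) (Finset.le_sup (f := fun S => ∑ u ∈ S, μ u) hS)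
    show ∑ u ∈ S, ν u = ∑ u ∈ S, μ u
    rw [← Finset.add_sum_erase S ν hv, ← Finset.add_sum_erase S μ hv]
    have hw' : w ∈ S.erase v := Finset.mem_erase.2 ⟨fun h => hvw h.symm, hw⟩
    rw [← Finset.add_sum_erase _ ν hw', ← Finset.add_sum_erase _ μ hw']
    have : ∑ u ∈ (S.erase v).erase w, ν u = ∑ u ∈ (S.erase v).erase w, μ u := by
      refine Finset.sum_congr rfl fun u hu => ?_
      have h1 := (Finset.mem_erase.1 hu).1
      have h2 := (Finset.mem_erase.1 (Finset.mem_erase.1 hu).2).1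
      exact hother u h2 h1
    rw [this, hμv, hμw, hνv, hνw]
    omega
  · -- v ∈ S, w ∉ S : pointwise ≤
    refine le_trans (Finset.sum_le_sum (g := μ) fun u hu => ?_)
      (le_trans (le_of_eq rfl) (Finset.le_sup (f := fun S => ∑ u ∈ S, μ u) hS))
    rcases eq_or_ne u v with rfl | huv
    · rw [hμv, hνv]; omega
    · have huw : u ≠ w := fun h => hw (h ▸ hu)
      exact le_of_eq (hother u huv huw)
  · -- w ∈ S, v ∉ S : replace w by v
    set S' := insert v (S.erase w) with hS'
    have hvnot : v ∉ S.erase w := fun h => hv (Finset.mem_of_mem_erase h)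
    have hcard : S'.card = S.card := by
      rw [hS', Finset.card_insert_of_notMem hvnot, Finset.card_erase_of_mem hw]
      have : 0 < S.card := Finset.card_pos.2 ⟨w, hw⟩
      omega
    have hS'mem : S' ∈ Finset.univ.powersetCard ℓ := by
      rw [Finset.mem_powersetCard_univ] at hS ⊢
      rw [hcard]; exact hS
    refine le_trans ?_ (Finset.le_sup (f := fun S => ∑ u ∈ S, μ u) hS'mem)
    show ∑ u ∈ S, ν u ≤ ∑ u ∈ S', μ u
    rw [hS', Finset.sum_insert hvnot, ← Finset.add_sum_erase S ν hw]
    have : ∑ u ∈ S.erase w, ν u = ∑ u ∈ S.erase w, μ u := by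
      refine Finset.sum_congr rfl fun u hu => ?_
      have h1 := (Finset.mem_erase.1 hu).1
      have h2 : u ≠ v := fun h => hv (h ▸ Finset.mem_of_mem_erase hu)
      exact hother u h2 h1
    rw [this, hνw, hμv]
    omega
  · -- neither
    refine le_trans (le_of_eq ?_) (Finset.le_sup (f := fun S => ∑ u ∈ S, μ u) hS)
    show ∑ u ∈ S, ν u = ∑ u ∈ S, μ u
    refine Finset.sum_congr rfl fun u hu => ?_
    exact hother u (fun h => hv (h ▸ hu)) (fun h => hw (h ▸ hu))


/-- the set of the `k` smallest indices of `Fin q` -/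
def firstK (q k : ℕ) : Finset (Fin q) := univ.filter fun j : Fin q => (j : ℕ) < k

lemma card_firstK (k : ℕ) (hk : k ≤ q) : (firstK q k).card = k := by
  have h : ∀ m ∈ Finset.range k, m < q := fun m hm => lt_of_lt_of_le (Finset.mem_range.1 hm) hk
  have : firstK q k = (Finset.range k).attachFin h := by
    ext j
    simp [firstK, Finset.mem_attachFin]
  rw [this, Finset.card_attachFin, Finset.card_range]

/-- for an antitone vector, any `k`-subset sum is at most the first-`k` sum. -/
lemma sum_le_sum_firstK (a : Fin q → ℝ) (ha : Antitone a) (k : ℕ) (hk : k ≤ q)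
    (s : Finset (Fin q)) (hs : s.card = k) :
    ∑ i ∈ s, a i ≤ ∑ i ∈ firstK q k, a i := by
  classical
  set t := firstK q k with ht
  have hcard : (s \ t).card = (t \ s).card := by
    have h1 : (s \ t).card = s.card - (s ∩ t).card := by
      rw [Finset.card_sdiff_add_card_inter s t |>.symm] at *
      omega
    have h2 : (t \ s).card = t.card - (t ∩ s).card := by
      rw [Finset.card_sdiff_add_card_inter t s |>.symm] at *
      omega
    rw [h1, h2, Finset.inter_comm, hs, card_firstK k hk]
  have key : ∑ i ∈ s \ t, a i ≤ ∑ i ∈ t \ s, a i := by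
    rcases Finset.eq_empty_or_nonempty (t \ s) with he | hne
    · have : (s \ t) = ∅ := Finset.card_eq_zero.1 (by rw [hcard, he]; simp)
      rw [this, he]
    · obtain ⟨j0, hj0, hj0min⟩ := Finset.exists_min_image (t \ s) a hne
      have hij : ∀ i ∈ s \ t, a i ≤ a j0 := by
        intro i hi
        have hik : k ≤ (i : ℕ) := by
          have := (Finset.mem_sdiff.1 hi).2
          simp only [ht, firstK, Finset.mem_filter, Finset.mem_univ, true_and, not_lt] at this
          exact this
        have hjk : (j0 : ℕ) < k := by
          have := (Finset.mem_sdiff.1 hj0).1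
          simpa [ht, firstK] using this
        exact ha (le_of_lt (show j0 < i from by
          rw [Fin.lt_def]; omega))
      calc ∑ i ∈ s \ t, a i ≤ (s \ t).card • a j0 := Finset.sum_le_card_nsmul _ _ _ hij
        _ = (t \ s).card • a j0 := by rw [hcard]
        _ ≤ ∑ i ∈ t \ s, a i := Finset.card_nsmul_le_sum _ _ _ hj0min
  have hsplit : ∀ u v : Finset (Fin q), ∑ i ∈ u, a i = ∑ i ∈ u \ v, a i + ∑ i ∈ u ∩ v, a i := by
    intro u v
    rw [add_comm, Finset.sum_inter_add_sum_sdiff]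
  rw [hsplit s t, hsplit t s, Finset.inter_comm t s]
  linarith

/-- Abel-summation positivity. -/
lemma abel_nonneg (d : ℕ) (c H : ℕ → ℝ)
    (hC : ∀ k, k ≤ d → 0 ≤ ∑ v ∈ range k, c v)
    (hCd : ∑ v ∈ range d, c v = 0)
    (hH : ∀ k, k + 1 < d → H (k + 1) ≤ H k) :
    0 ≤ ∑ v ∈ range d, c v * H v := by
  rcases Nat.eq_zero_or_pos d with rfl | hd
  · simp
  have key : ∀ n, 1 ≤ n → n ≤ d →
      (∑ v ∈ range n, c v) * H (n - 1) ≤ ∑ v ∈ range n, c v * H v := by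
    intro n h1 h2
    induction n with
    | zero => omega
    | succ m ih =>
      rcases Nat.eq_zero_or_pos m with rfl | hm
      · simp
      have hmd : m ≤ d := by omega
      have ihm := ih hm hmd
      rw [Finset.sum_range_succ, Finset.sum_range_succ (f := fun v => c v * H v)]
      have hHm : H m ≤ H (m - 1) := by
        have := hH (m - 1) (by omega)
        have hm1 : m - 1 + 1 = m := by omega
        rwa [hm1] at this
      have hCm : 0 ≤ ∑ v ∈ range m, c v := hC m hmd
      have : (∑ v ∈ range m, c v) * H m ≤ (∑ v ∈ range m, c v) * H (m - 1) :=
        mul_le_mul_of_nonneg_left hHm hCm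
      have hsucc : m + 1 - 1 = m := by omega
      rw [hsucc]
      nlinarith
  have := key d hd le_rfl
  rw [hCd] at this
  simpa using this


section Hlemma

variable (ℓ : ℕ) (k : Fin L) (R : Fin q → ℝ)

/-- one-coordinate partial expectation -/
noncomputable def Hfun (u : Fin q) : ℝ :=
  ∑ x ∈ univ.filter (fun x : Fin L → Fin q => x k = u),
    (plurL ℓ x : ℝ) * ∏ k' ∈ univ.erase k, R (x k')

lemma Hfun_antitone (hR0 : ∀ u, 0 ≤ R u) (hRa : Antitone R)
    {v w : Fin q} (hvw : v ≤ w) : Hfun ℓ k R w ≤ Hfun ℓ k R v := by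
  classical
  rcases eq_or_lt_of_le hvw with rfl | hlt
  · exact le_rfl
  have hne : v ≠ w := ne_of_lt hlt
  set τ : Equiv.Perm (Fin q) := Equiv.swap v w with hτ
  set E : Finset (Fin L) := univ.erase k with hE
  set fib : Finset (Fin L → Fin q) := univ.filter (fun x : Fin L → Fin q => x k = v) with hfib
  set W : (Fin L → Fin q) → ℝ := fun x => ∏ k' ∈ E, R (x k') with hW
  set W' : (Fin L → Fin q) → ℝ := fun x => ∏ k' ∈ E, R (τ (x k')) with hW'
  -- Step A : H w as a sum over the fiber of v
  have hstepA : Hfun ℓ k R w = ∑ x ∈ fib, (plurL ℓ x : ℝ) * W' x := by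
    unfold Hfun
    refine Finset.sum_bij' (i := fun (x : Fin L → Fin q) _ => fun k' => τ (x k'))
      (j := fun (y : Fin L → Fin q) _ => fun k' => τ (y k')) ?_ ?_ ?_ ?_ ?_
    · intro x hx
      simp only [hfib, mem_filter, mem_univ, true_and] at hx ⊢
      rw [hx]
      simp [hτ, Equiv.swap_apply_right]
    · intro y hy
      simp only [hfib, mem_filter, mem_univ, true_and] at hy ⊢
      rw [hy]
      simp [hτ, Equiv.swap_apply_left]
    · intro x _; funext k'; simp [hτ]
    · intro y _; funext k'; simp [hτ]
    · intro x hx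
      rw [plurL_comp_perm]
      congr 1
      simp only [hW']
      exact Finset.prod_congr rfl fun k' _ => by simp [hτ]
  -- the involution ρ on the fiber of v
  set ρ : (Fin L → Fin q) → (Fin L → Fin q) :=
    fun x => Function.update (fun k' => τ (x k')) k v with hρ
  have hρk : ∀ x, ρ x k = v := by intro x; simp [hρ]
  have hρne : ∀ x (k' : Fin L), k' ≠ k → ρ x k' = τ (x k') := by
    intro x k' hk'; simp [hρ, Function.update_of_ne hk']
  have hρmem : ∀ x ∈ fib, ρ x ∈ fib := by
    intro x _; simp [hfib, hρk]
  have hρρ : ∀ x ∈ fib, ρ (ρ x) = x := by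
    intro x hx
    simp only [hfib, mem_filter, mem_univ, true_and] at hx
    funext k'
    rcases eq_or_ne k' k with rfl | hk'
    · rw [hρk, hx]
    · rw [hρne _ _ hk', hρne _ _ hk']; simp [hτ]
  have hWρ : ∀ x, W (ρ x) = W' x := by
    intro x
    refine Finset.prod_congr rfl fun k' hk' => ?_
    rw [hρne _ _ (Finset.ne_of_mem_erase hk')]
  have hW'ρ : ∀ x, W' (ρ x) = W x := by
    intro x
    refine Finset.prod_congr rfl fun k' hk' => ?_
    rw [hρne _ _ (Finset.ne_of_mem_erase hk')]
    simp [hτ]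
  -- difference as symmetrized sum
  have hdiff : Hfun ℓ k R v - Hfun ℓ k R w
      = ∑ x ∈ fib, (plurL ℓ x : ℝ) * (W x - W' x) := by
    rw [hstepA]
    unfold Hfun
    rw [← Finset.sum_sub_distrib]
    exact Finset.sum_congr rfl fun x _ => by ring
  have hreindex : ∑ x ∈ fib, (plurL ℓ x : ℝ) * (W x - W' x)
      = ∑ x ∈ fib, (plurL ℓ (ρ x) : ℝ) * (W' x - W x) := by
    refine Finset.sum_nbij' (i := ρ) (j := ρ) hρmem hρmem hρρ hρρ ?_
    intro x hx
    rw [hρρ x hx, hW'ρ x, hWρ x]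
  -- termwise nonnegativity of the symmetrization
  have hterm : ∀ x ∈ fib,
      0 ≤ ((plurL ℓ x : ℝ) - (plurL ℓ (ρ x) : ℝ)) * (W x - W' x) := by
    intro x hx
    simp only [hfib, mem_filter, mem_univ, true_and] at hx
    set a : ℕ := (E.filter (fun k' => x k' = v)).card with ha
    set b : ℕ := (E.filter (fun k' => x k' = w)).card with hb
    set A : ℝ := ∏ k' ∈ E.filter (fun k' => ¬(x k' = v) ∧ ¬(x k' = w)), R (x k') with hA
    have hA0 : 0 ≤ A := Finset.prod_nonneg fun _ _ => hR0 _
    -- factorizations of W and W'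
    have hsplit : ∀ f : Fin L → ℝ, ∏ k' ∈ E, f k'
        = (∏ k' ∈ E.filter (fun k' => x k' = v), f k') *
          ((∏ k' ∈ E.filter (fun k' => x k' = w), f k') *
           (∏ k' ∈ E.filter (fun k' => ¬x k' = v ∧ ¬x k' = w), f k')) := by
      intro f
      rw [← Finset.prod_filter_mul_prod_filter_not E (fun k' => x k' = v) f]
      congr 1
      rw [← Finset.prod_filter_mul_prod_filter_not (E.filter (fun k' => ¬x k' = v))
        (fun k' => x k' = w) f, Finset.filter_filter, Finset.filter_filter]
      congr 2
      apply Finset.filter_congr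
      intro k' _
      simp only [and_iff_right_iff_imp]
      exact fun h hv' => hne (hv'.symm.trans h)
    have hWx : W x = R v ^ a * (R w ^ b * A) := by
      simp only [hW]
      rw [hsplit (fun k' => R (x k'))]
      rw [Finset.prod_eq_pow_card (b := R v) (fun k' hk' => by
          rw [(Finset.mem_filter.1 hk').2]),
        Finset.prod_eq_pow_card (s := E.filter (fun k' => x k' = w)) (b := R w)
          (fun k' hk' => by rw [(Finset.mem_filter.1 hk').2]), ← ha, ← hb, ← hA]
    have hW'x : W' x = R w ^ a * (R v ^ b * A) := by
      simp only [hW']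
      rw [hsplit (fun k' => R (τ (x k')))]
      rw [Finset.prod_eq_pow_card (b := R w) (fun k' hk' => by
          rw [(Finset.mem_filter.1 hk').2, hτ, Equiv.swap_apply_left]),
        Finset.prod_eq_pow_card (s := E.filter (fun k' => x k' = w)) (b := R v)
          (fun k' hk' => by rw [(Finset.mem_filter.1 hk').2, hτ, Equiv.swap_apply_right]),
        ← ha, ← hb]
      congr 1
      rw [hA]
      refine congrArg _ (Finset.prod_congr rfl fun k' hk' => ?_)
      have h1 := (Finset.mem_filter.1 hk').2.1
      have h2 := (Finset.mem_filter.1 hk').2.2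
      rw [hτ, Equiv.swap_apply_of_ne_of_ne h1 h2]
    -- counts
    have hkE : k ∉ E := by simp [hE]
    have hcnt_xv : cnt x v = a + 1 := by
      unfold cnt
      have : univ.filter (fun k' => x k' = v) = insert k (E.filter (fun k' => x k' = v)) := by
        ext k'
        simp only [mem_filter, mem_univ, true_and, mem_insert, hE, mem_erase]
        rcases eq_or_ne k' k with rfl | hk'
        · simp [hx]
        · simp [hk']
      rw [this, Finset.card_insert_of_notMem (fun h => hkE (Finset.mem_of_mem_filter k h)), ha]
    have hcnt_xw : cnt x w = b := by
      unfold cnt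
      rw [hb]
      congr 1
      ext k'
      simp only [mem_filter, mem_univ, true_and, hE, mem_erase]
      rcases eq_or_ne k' k with rfl | hk'
      · simp [hx, hne]
      · simp [hk']
    have hτval : ∀ k', k' ≠ k → ((ρ x k' = v ↔ x k' = w) ∧ (ρ x k' = w ↔ x k' = v)) := by
      intro k' hk'
      rw [hρne _ _ hk', hτ]
      constructor
      · rw [Equiv.swap_apply_eq_iff, Equiv.swap_apply_left]
      · rw [Equiv.swap_apply_eq_iff, Equiv.swap_apply_right]
    have hcnt_ρv : cnt (ρ x) v = b + 1 := by
      unfold cnt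
      have : univ.filter (fun k' => ρ x k' = v) = insert k (E.filter (fun k' => x k' = w)) := by
        ext k'
        simp only [mem_filter, mem_univ, true_and, mem_insert, hE, mem_erase]
        rcases eq_or_ne k' k with rfl | hk'
        · simp [hρk]
        · simp only [hk', false_or]
          rw [(hτval k' hk').1]
          tauto
      rw [this, Finset.card_insert_of_notMem (fun h => hkE (Finset.mem_of_mem_filter k h)), hb]
    have hcnt_ρw : cnt (ρ x) w = a := by
      unfold cnt
      rw [ha]
      congr 1
      ext k'
      simp only [mem_filter, mem_univ, true_and, hE, mem_erase]
      rcases eq_or_ne k' k with rfl | hk'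
      · rw [hρk]; simp [hne]
      · rw [(hτval k' hk').2]
        simp [hk']
    have hcnt_other : ∀ u, u ≠ v → u ≠ w → cnt (ρ x) u = cnt x u := by
      intro u huv huw
      unfold cnt
      congr 1
      ext k'
      simp only [mem_filter, mem_univ, true_and]
      rcases eq_or_ne k' k with rfl | hk'
      · rw [hρk, hx]
      · rw [hρne _ _ hk', hτ, Equiv.swap_apply_eq_iff, Equiv.swap_apply_of_ne_of_ne huv huw]
    -- sign analysis
    rcases le_or_gt b a with hab | hab
    · -- b ≤ a : both factors nonnegative
      apply mul_nonneg
      · rw [sub_nonneg, Nat.cast_le, plurL_eq_plurC, plurL_eq_plurC]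
        exact plurC_le ℓ (cnt x) (cnt (ρ x)) v w hne a b hab hcnt_other hcnt_xv hcnt_xw
          hcnt_ρv hcnt_ρw
      · rw [sub_nonneg, hWx, hW'x]
        have hRvw : R w ≤ R v := hRa hvw
        have key : R w ^ a * R v ^ b ≤ R v ^ a * R w ^ b := by
          have h1 : R w ^ a = R w ^ b * R w ^ (a - b) := by
            rw [← pow_add]; congr 1; omega
          have h2 : R v ^ a = R v ^ b * R v ^ (a - b) := by
            rw [← pow_add]; congr 1; omega
          rw [h1, h2]
          have hww : R w ^ (a-b) ≤ R v ^ (a-b) := pow_le_pow_left₀ (hR0 w) hRvw _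
          calc R w ^ b * R w ^ (a-b) * R v ^ b ≤ R w ^ b * R v ^ (a-b) * R v ^ b := by
                apply mul_le_mul_of_nonneg_right _ (pow_nonneg (hR0 v) b)
                exact mul_le_mul_of_nonneg_left hww (pow_nonneg (hR0 w) b)
            _ = R v ^ b * R v ^ (a-b) * R w ^ b := by ring
        nlinarith [hA0, key]
    · -- a < b : both factors nonpositive
      have hab' : a ≤ b := le_of_lt hab
      rw [show ((plurL ℓ x : ℝ) - (plurL ℓ (ρ x) : ℝ)) * (W x - W' x)
          = ((plurL ℓ (ρ x) : ℝ) - (plurL ℓ x : ℝ)) * (W' x - W x) by ring]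
      apply mul_nonneg
      · rw [sub_nonneg, Nat.cast_le, plurL_eq_plurC, plurL_eq_plurC]
        exact plurC_le ℓ (cnt (ρ x)) (cnt x) v w hne b a hab'
          (fun u h1 h2 => (hcnt_other u h1 h2).symm) hcnt_ρv hcnt_ρw hcnt_xv hcnt_xw
      · rw [sub_nonneg, hWx, hW'x]
        have hRvw : R w ≤ R v := hRa hvw
        have key : R v ^ a * R w ^ b ≤ R w ^ a * R v ^ b := by
          have h1 : R w ^ b = R w ^ a * R w ^ (b - a) := by
            rw [← pow_add]; congr 1; omega
          have h2 : R v ^ b = R v ^ a * R v ^ (b - a) := by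
            rw [← pow_add]; congr 1; omega
          rw [h1, h2]
          have hww : R w ^ (b-a) ≤ R v ^ (b-a) := pow_le_pow_left₀ (hR0 w) hRvw _
          calc R v ^ a * (R w ^ a * R w ^ (b-a)) ≤ R v ^ a * (R w ^ a * R v ^ (b-a)) := by
                apply mul_le_mul_of_nonneg_left _ (pow_nonneg (hR0 v) a)
                exact mul_le_mul_of_nonneg_left hww (pow_nonneg (hR0 w) a)
            _ = R w ^ a * (R v ^ a * R v ^ (b-a)) := by ring
        nlinarith [hA0, key]
  -- conclude
  have h2S : (Hfun ℓ k R v - Hfun ℓ k R w) + (Hfun ℓ k R v - Hfun ℓ k R w)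
      = ∑ x ∈ fib, ((plurL ℓ x : ℝ) - (plurL ℓ (ρ x) : ℝ)) * (W x - W' x) := by
    nth_rewrite 2 [hdiff]
    rw [hreindex, hdiff, ← Finset.sum_add_distrib]
    exact Finset.sum_congr rfl fun x _ => by ring
  have : 0 ≤ (Hfun ℓ k R v - Hfun ℓ k R w) + (Hfun ℓ k R v - Hfun ℓ k R w) := by
    rw [h2S]; exact Finset.sum_nonneg hterm
  linarith

end Hlemma

lemma sum_range_dite {q : ℕ} (k : ℕ) (hk : k ≤ q) (g : Fin q → ℝ) :
    ∑ n ∈ range k, (if h : n < q then g ⟨n, h⟩ else 0) = ∑ j ∈ firstK q k, g j := by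
  refine Finset.sum_bij'
    (i := fun n hn => (⟨n, lt_of_lt_of_le (Finset.mem_range.1 hn) hk⟩ : Fin q))
    (j := fun j _ => (j : ℕ)) ?_ ?_ ?_ ?_ ?_
  · intro n hn
    simp only [firstK, Finset.mem_filter, Finset.mem_univ, true_and]
    exact Finset.mem_range.1 hn
  · intro j hj
    exact Finset.mem_range.2 ((Finset.mem_filter.1 hj).2)
  · intro n hn
    rfl
  · intro j hj
    rfl
  · intro n hn
    have hn' : n < q := lt_of_lt_of_le (Finset.mem_range.1 hn) hk
    simp [dif_pos hn']

lemma sum_univ_eq_sum_range_dite {q : ℕ} (g : Fin q → ℝ) :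
    ∑ v : Fin q, g v = ∑ n ∈ range q, (if h : n < q then g ⟨n, h⟩ else 0) := by
  rw [← Fin.sum_univ_eq_sum_range (fun n => if h : n < q then g ⟨n, h⟩ else 0) q]
  refine Finset.sum_congr rfl fun v _ => ?_
  simp [v.isLt]

lemma firstK_self (q : ℕ) : firstK q q = univ := by
  ext j; simp [firstK, j.isLt]

/-- monotonicity of `fqLl` along the segment from `b` to `a`. -/
lemma fqLl_mono_line (q L ℓ : ℕ) (a b : Fin q → ℝ)
    (ha0 : ∀ i, 0 ≤ a i) (hb0 : ∀ i, 0 ≤ b i)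
    (haA : Antitone a) (hbA : Antitone b)
    (hsum : ∑ i, a i = ∑ i, b i)
    (hdom : ∀ k, k ≤ q → ∑ i ∈ firstK q k, b i ≤ ∑ i ∈ firstK q k, a i) :
    fqLl q L ℓ b ≤ fqLl q L ℓ a := by
  classical
  set c : Fin q → ℝ := fun v => a v - b v with hc
  set R : ℝ → Fin q → ℝ := fun t v => b v + t * c v with hR
  set F : ℝ → ℝ := fun t => fqLl q L ℓ (R t) with hF
  set D : ℝ → ℝ := fun t => ∑ x : Fin L → Fin q,
      (∑ i : Fin L, (∏ j ∈ univ.erase i, R t (x j)) * c (x i)) * (plurL ℓ x : ℝ) with hD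
  -- derivative
  have hder : ∀ t : ℝ, HasDerivAt F (D t) t := by
    intro t
    have hx : ∀ x : Fin L → Fin q,
        HasDerivAt (fun t => (∏ i, R t (x i)) * (plurL ℓ x : ℝ))
          ((∑ i : Fin L, (∏ j ∈ univ.erase i, R t (x j)) * c (x i)) * (plurL ℓ x : ℝ)) t := by
      intro x
      have hfac : ∀ i : Fin L, HasDerivAt (fun t => R t (x i)) (c (x i)) t := by
        intro i
        have h1 : HasDerivAt (fun t : ℝ => t * c (x i)) (c (x i)) t := by
          simpa using (hasDerivAt_id t).mul_const (c (x i))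
        simpa [hR] using h1.const_add (b (x i))
      have hprod := HasDerivAt.fun_finsetProd (u := (univ : Finset (Fin L)))
        (f := fun i t => R t (x i)) (f' := fun i => c (x i)) (fun i _ => hfac i)
      have hprod' : HasDerivAt (fun t => ∏ i, R t (x i))
          (∑ i : Fin L, (∏ j ∈ univ.erase i, R t (x j)) * c (x i)) t := by
        simpa [smul_eq_mul] using hprod
      exact hprod'.mul_const _
    have := HasDerivAt.fun_sum (u := (univ : Finset (Fin L → Fin q)))
      (A := fun x t => (∏ i, R t (x i)) * (plurL ℓ x : ℝ))
      (A' := fun x => (∑ i : Fin L, (∏ j ∈ univ.erase i, R t (x j)) * c (x i)) * (plurL ℓ x : ℝ))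
      (fun x _ => hx x)
    simpa [hF, hD, fqLl] using this
  -- nonnegativity of the derivative on [0,1]
  have hnonneg : ∀ t ∈ Set.Icc (0:ℝ) 1, 0 ≤ D t := by
    intro t ht
    obtain ⟨ht0, ht1⟩ := ht
    have hR0 : ∀ u, 0 ≤ R t u := by
      intro u
      have := ha0 u; have := hb0 u
      simp only [hR, hc]
      nlinarith
    have hRa : Antitone (R t) := by
      intro v w hvw
      have h1 := haA hvw; have h2 := hbA hvw
      simp only [hR, hc]
      nlinarith
    -- rearrange D t
    have hre : D t = ∑ i : Fin L, ∑ v : Fin q, c v * Hfun ℓ i (R t) v := by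
      simp only [hD]
      have : ∀ x : Fin L → Fin q,
          (∑ i : Fin L, (∏ j ∈ univ.erase i, R t (x j)) * c (x i)) * (plurL ℓ x : ℝ)
          = ∑ i : Fin L, (∏ j ∈ univ.erase i, R t (x j)) * c (x i) * (plurL ℓ x : ℝ) := by
        intro x; rw [Finset.sum_mul]
      rw [Finset.sum_congr rfl fun x _ => this x, Finset.sum_comm]
      refine Finset.sum_congr rfl fun i _ => ?_
      rw [← Finset.sum_fiberwise (s := (univ : Finset (Fin L → Fin q)))
        (g := fun x : Fin L → Fin q => x i)
        (f := fun x => (∏ j ∈ univ.erase i, R t (x j)) * c (x i) * (plurL ℓ x : ℝ))]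
      refine Finset.sum_congr rfl fun v _ => ?_
      unfold Hfun
      rw [Finset.mul_sum]
      refine Finset.sum_congr rfl fun x hx => ?_
      have hxv : x i = v := by simpa using (Finset.mem_filter.1 hx).2
      rw [hxv]
      ring
    rw [hre]
    refine Finset.sum_nonneg fun i _ => ?_
    -- Abel summation over the alphabet
    have habel : 0 ≤ ∑ n ∈ range q,
        (if h : n < q then c ⟨n, h⟩ else 0) *
        (if h : n < q then Hfun ℓ i (R t) ⟨n, h⟩ else 0) := by
      apply abel_nonneg q (fun n => if h : n < q then c ⟨n, h⟩ else 0)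
        (fun n => if h : n < q then Hfun ℓ i (R t) ⟨n, h⟩ else 0)
      · intro k hk
        rw [sum_range_dite k hk]
        have := hdom k hk
        rw [show ∑ j ∈ firstK q k, c j = ∑ j ∈ firstK q k, a j - ∑ j ∈ firstK q k, b j by
          rw [← Finset.sum_sub_distrib]]
        linarith
      · rw [sum_range_dite q le_rfl, firstK_self]
        rw [show ∑ j : Fin q, c j = ∑ j, a j - ∑ j, b j by rw [← Finset.sum_sub_distrib]]
        rw [hsum]; ring
      · intro n hn
        have h1 : n + 1 < q := hn
        have h2 : n < q := by omega
        rw [dif_pos h1, dif_pos h2]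
        exact Hfun_antitone ℓ i (R t) hR0 hRa (by simp [Fin.mk_le_mk])
    calc (0:ℝ) ≤ ∑ n ∈ range q,
        (if h : n < q then c ⟨n, h⟩ else 0) *
        (if h : n < q then Hfun ℓ i (R t) ⟨n, h⟩ else 0) := habel
      _ = ∑ v : Fin q, c v * Hfun ℓ i (R t) v := by
          rw [sum_univ_eq_sum_range_dite (fun v => c v * Hfun ℓ i (R t) v)]
          refine Finset.sum_congr rfl fun n hn => ?_
          have h : n < q := Finset.mem_range.1 hn
          rw [dif_pos h, dif_pos h, dif_pos h]
  -- monotonicity on [0,1]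
  have hmono : MonotoneOn F (Set.Icc (0:ℝ) 1) := by
    apply monotoneOn_of_deriv_nonneg (convex_Icc 0 1)
    · exact fun s _ => ((hder s).differentiableAt.continuousAt).continuousWithinAt
    · exact fun s _ => (hder s).differentiableAt.differentiableWithinAt
    · intro s hs
      rw [(hder s).deriv]
      rw [interior_Icc] at hs
      exact hnonneg s ⟨le_of_lt hs.1, le_of_lt hs.2⟩
  have h01 := hmono (Set.left_mem_Icc.2 zero_le_one) (Set.right_mem_Icc.2 zero_le_one)
    zero_le_one
  have hF0 : F 0 = fqLl q L ℓ b := by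
    simp only [hF]
    congr 1
    funext v
    simp [hR]
  have hF1 : F 1 = fqLl q L ℓ a := by
    simp only [hF]
    congr 1
    funext v
    simp [hR, hc]
  rwa [hF0, hF1] at h01


lemma fqLl_comp_perm (ℓ : ℕ) (P : Fin q → ℝ) (σ : Equiv.Perm (Fin q)) :
    fqLl q L ℓ (fun i => P (σ i)) = fqLl q L ℓ P := by
  classical
  unfold fqLl
  have e : (Fin L → Fin q) ≃ (Fin L → Fin q) := Equiv.piCongrRight fun _ => σ
  rw [← Equiv.sum_comp (Equiv.piCongrRight fun _ : Fin L => σ)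
    (fun y : Fin L → Fin q => (∏ i, P (y i)) * (plurL ℓ y : ℝ))]
  refine Finset.sum_congr rfl fun x _ => ?_
  have h1 : (Equiv.piCongrRight fun _ : Fin L => σ) x = fun k => σ (x k) := rfl
  rw [h1, plurL_comp_perm]


end Stmt12Aux

open Stmt12Aux in
theorem stmt12 (q L ℓ : ℕ) (hq : 2 ≤ q) (hL : 2 ≤ L) (hl1 : 1 ≤ ℓ)
    (hlq : ℓ ≤ q - 1) (P Q : Fin q → ℝ)
    (hP : ∀ i, 0 ≤ P i) (hPsum : ∑ i, P i = 1)
    (hQ : ∀ i, 0 ≤ Q i) (hQsum : ∑ i, Q i = 1)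
    (hmaj : Majorizes P Q) :
    fqLl q L ℓ Q ≤ fqLl q L ℓ P := by
  classical
  set σ : Equiv.Perm (Fin q) := Tuple.sort (fun i => -P i) with hσ
  set ρ : Equiv.Perm (Fin q) := Tuple.sort (fun i => -Q i) with hρ
  set a : Fin q → ℝ := fun i => P (σ i) with ha
  set b : Fin q → ℝ := fun i => Q (ρ i) with hb
  have haA : Antitone a := by
    intro i j hij
    have := Tuple.monotone_sort (fun i => -P i) hij
    simpa [ha, neg_le_neg_iff] using this
  have hbA : Antitone b := by
    intro i j hij
    have := Tuple.monotone_sort (fun i => -Q i) hij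
    simpa [hb, neg_le_neg_iff] using this
  have hsuma : ∑ i, a i = 1 := by
    rw [ha]
    rw [Equiv.sum_comp σ P]
    exact hPsum
  have hsumb : ∑ i, b i = 1 := by
    rw [hb, Equiv.sum_comp ρ Q]
    exact hQsum
  -- dominance of partial sums
  have hdom : ∀ k, k ≤ q → ∑ i ∈ firstK q k, b i ≤ ∑ i ∈ firstK q k, a i := by
    intro k hk
    have hBdd : ∀ (f : Fin q → ℝ),
        BddAbove ((fun s : Finset (Fin q) => ∑ i ∈ s, f i) '' {s : Finset (Fin q) | s.card = k}) :=
      fun f => (Set.toFinite _).image _ |>.bddAbove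
    have h1 : ∑ i ∈ firstK q k, b i ≤ kMaxSum Q k := by
      have : ∑ i ∈ firstK q k, b i = ∑ i ∈ (firstK q k).image ρ, Q i := by
        rw [Finset.sum_image (fun x _ y _ h => ρ.injective h)]
      rw [this]
      apply le_csSup (hBdd Q)
      exact ⟨(firstK q k).image ρ, by
        simp only [Set.mem_setOf_eq, Finset.card_image_of_injective _ ρ.injective]
        exact card_firstK k hk, rfl⟩
    have h2 : kMaxSum Q k ≤ kMaxSum P k := hmaj.1 k
    have h3 : kMaxSum P k ≤ ∑ i ∈ firstK q k, a i := by
      apply csSup_le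
      · exact ⟨∑ i ∈ firstK q k, P i, ⟨firstK q k, card_firstK k hk, rfl⟩⟩
      · rintro y ⟨s, hs, rfl⟩
        simp only [Set.mem_setOf_eq] at hs
        show ∑ i ∈ s, P i ≤ ∑ i ∈ firstK q k, a i
        have : ∑ i ∈ s, P i = ∑ i ∈ s.image σ.symm, a i := by
          rw [Finset.sum_image (fun x _ y _ h => σ.symm.injective h)]
          refine Finset.sum_congr rfl fun i _ => ?_
          rw [ha]
          simp
        rw [this]
        exact sum_le_sum_firstK a haA k hk (s.image σ.symm)
          (by rw [Finset.card_image_of_injective _ σ.symm.injective]; exact hs)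
    linarith
  have key := fqLl_mono_line q L ℓ a b
    (fun i => hP _) (fun i => hQ _) haA hbA (by rw [hsuma, hsumb]) hdom
  rwa [ha, hb, fqLl_comp_perm, fqLl_comp_perm] at key
end
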